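/- arXiv:1112.0158 — 9 statements merged into one kernel-verified Lean document; each statement's English description precedes it below -/
import Mathlib

section
/- Let {φ_i}_{i=1}^M be an ε-Riesz sequence in a complex Hilbert space (0 < ε < 1), and let {I_1, I_2} be a partition of {1,2,…,M}. If φ ∈ span{φ_i : i ∈ I_1} and ψ ∈ span{φ_i : i ∈ I_2} are unit vectors, then |⟨φ, ψ⟩| ≤ 2ε(1 + ε/2). -/
open scoped BigOperators

lemma coeffs_of_mem_span {H : Type*} [NormedAddCommGroup H] [InnerProductSpace ℂ H]
    {M : ℕ} (φ : Fin M → H) (I : Finset (Fin M)) {x : H}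
    (hx : x ∈ Submodule.span ℂ (φ '' ↑I)) :
    ∃ a : Fin M → ℂ, (∀ i ∉ I, a i = 0) ∧ ∑ i, a i • φ i = x := by
  rcases (Finsupp.mem_span_image_iff_linearCombination ℂ).1 hx with ⟨l, hl, rfl⟩
  refine ⟨l, fun i hi => (Finsupp.mem_supported' ℂ l).1 hl i (by simpa using hi), ?_⟩
  rw [Finsupp.linearCombination_apply, Finsupp.sum_fintype]
  intro i; simp

/-- Unit vectors in the spans of two complementary blocks of an
ε-Riesz sequence are nearly orthogonal: |⟨φ,ψ⟩| ≤ 2ε(1+ε/2). -/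
theorem rip_nearly_orthogonal_spans {H : Type*} [NormedAddCommGroup H]
    [InnerProductSpace ℂ H]
    {M : ℕ} (φ : Fin M → H) (ε : ℝ) (hε0 : 0 < ε) (hε1 : ε < 1)
    (hRiesz : ∀ a : Fin M → ℂ,
      (1 / (1 + ε)) * ∑ i, ‖a i‖ ^ 2 ≤ ‖∑ i, a i • φ i‖ ^ 2 ∧
      ‖∑ i, a i • φ i‖ ^ 2 ≤ (1 + ε) * ∑ i, ‖a i‖ ^ 2)
    (I₁ I₂ : Finset (Fin M)) (hdisj : Disjoint I₁ I₂) (hcover : I₁ ∪ I₂ = Finset.univ)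
    (x y : H)
    (hx : x ∈ Submodule.span ℂ (φ '' ↑I₁)) (hy : y ∈ Submodule.span ℂ (φ '' ↑I₂))
    (hx1 : ‖x‖ = 1) (hy1 : ‖y‖ = 1) :
    ‖(inner ℂ x y : ℂ)‖ ≤ 2 * ε * (1 + ε / 2) := by
  set z : ℂ := inner ℂ x y with hz
  by_cases hz0 : z = 0
  · rw [hz0]; simp; positivity
  obtain ⟨a, ha0, hax⟩ := coeffs_of_mem_span φ I₁ hx
  obtain ⟨b, hb0, hby⟩ := coeffs_of_mem_span φ I₂ hy
  -- phase
  set c : ℂ := (starRingEnd ℂ) z / (‖z‖ : ℂ) with hc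
  have hnz : (‖z‖ : ℂ) ≠ 0 := by
    simpa using (norm_ne_zero_iff.2 hz0)
  have hcz : c * z = (‖z‖ : ℂ) := by
    rw [hc, div_mul_eq_mul_div, mul_comm, Complex.mul_conj, div_eq_iff hnz]
    norm_cast
    rw [Complex.normSq_eq_norm_sq, sq]
  have hcnorm : ‖c‖ = 1 := by
    rw [hc, norm_div]
    simp [hz0]
  -- y' = c • y
  have hinner : (inner ℂ x (c • y) : ℂ) = (‖z‖ : ℂ) := by
    rw [inner_smul_right, ← hz, hcz]
  have hre : Complex.re (inner ℂ x (c • y) : ℂ) = ‖z‖ := by rw [hinner]; simp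
  have hsum_add : ∑ i, (a i + c * b i) • φ i = x + c • y := by
    rw [← hax, ← hby, Finset.smul_sum, ← Finset.sum_add_distrib]
    congr 1; ext i; rw [add_smul, mul_smul]
  have hsum_sub : ∑ i, (a i - c * b i) • φ i = x - c • y := by
    rw [← hax, ← hby, Finset.smul_sum, ← Finset.sum_sub_distrib]
    congr 1; ext i; rw [sub_smul, mul_smul]
  -- pointwise norm equality
  have hpt : ∀ i, ‖a i - c * b i‖ ^ 2 = ‖a i + c * b i‖ ^ 2 := by
    intro i
    by_cases hi : i ∈ I₁
    · have : b i = 0 := hb0 i (Finset.disjoint_left.1 hdisj hi)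
      simp [this]
    · have : a i = 0 := ha0 i hi
      simp [this]
  have hSeq : ∑ i, ‖a i - c * b i‖ ^ 2 = ∑ i, ‖a i + c * b i‖ ^ 2 :=
    Finset.sum_congr rfl fun i _ => hpt i
  set S : ℝ := ∑ i, ‖a i + c * b i‖ ^ 2 with hS
  have h1 : ‖x + c • y‖ ^ 2 ≤ (1 + ε) * S := by
    have := (hRiesz fun i => a i + c * b i).2
    rwa [hsum_add] at this
  have h2 : (1 / (1 + ε)) * S ≤ ‖x - c • y‖ ^ 2 := by
    have := (hRiesz fun i => a i - c * b i).1
    rwa [hsum_sub, hSeq] at this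
  have hcy : ‖c • y‖ = 1 := by rw [norm_smul, hcnorm, hy1, one_mul]
  have hexp1 : ‖x + c • y‖ ^ 2 = 2 + 2 * ‖z‖ := by
    rw [@norm_add_sq ℂ, hx1, hcy, hinner]
    simp; ring
  have hexp2 : ‖x - c • y‖ ^ 2 = 2 - 2 * ‖z‖ := by
    rw [@norm_sub_sq ℂ, hx1, hcy, hinner]
    simp; ring
  have hεp : (0:ℝ) < 1 + ε := by linarith
  rw [hexp1] at h1; rw [hexp2] at h2
  have hh : S / (1 + ε) ≤ 2 - 2 * ‖z‖ := by
    rw [div_eq_mul_inv, mul_comm]; simpa [one_div] using h2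
  have h2' : S ≤ (2 - 2 * ‖z‖) * (1 + ε) := (div_le_iff₀ hεp).1 hh
  nlinarith [norm_nonneg z, sq_nonneg ε, sq_nonneg (1+ε)]
end

section
/- Let {φ_i}_{i=1}^M be a unit norm tight frame for an N-dimensional complex Hilbert space H_N which has the restricted isometry property with constant ε (0 < ε < 1) for sets of size s. Let {I_j}_{j=1}^K be a partition of {1,2,…,M} with |I_j| ≤ s for every j, let W_j = span{φ_i : i ∈ I_j}, and let P_j be the orthogonal projection onto W_j. Then for every φ ∈ H_N: (M/((1+ε)N)) ‖φ‖² ≤ Σ_{j=1}^K ‖P_j φ‖² ≤ ((1+ε)M/N) ‖φ‖²; that is, {(W_j, 1)}_{j=1}^K is a fusion frame with bounds M/((1+ε)N) and M(1+ε)/N. -/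
open scoped BigOperators

/-- A unit norm tight frame with RIP constant ε for sets of size s
yields, for any partition into blocks of size ≤ s, a fusion frame of the block
spans with bounds M/((1+ε)N) and M(1+ε)/N. -/
theorem rip_fusion_frame {H : Type*} [NormedAddCommGroup H] [InnerProductSpace ℂ H]
    [FiniteDimensional ℂ H] {N M : ℕ} (hN : Module.finrank ℂ H = N)
    (φ : Fin M → H) (hnorm : ∀ i, ‖φ i‖ = 1)
    (htight : ∀ x : H, ∑ i, ‖(inner ℂ (φ i) x : ℂ)‖ ^ 2 = ((M : ℝ) / N) * ‖x‖ ^ 2)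
    (ε : ℝ) (hε0 : 0 < ε) (hε1 : ε < 1) (s : ℕ) (hsN : s ≤ N)
    (hRIP : ∀ I : Finset (Fin M), I.card ≤ s → ∀ a : Fin M → ℂ,
      (1 / (1 + ε)) * ∑ i ∈ I, ‖a i‖ ^ 2 ≤ ‖∑ i ∈ I, a i • φ i‖ ^ 2 ∧
      ‖∑ i ∈ I, a i • φ i‖ ^ 2 ≤ (1 + ε) * ∑ i ∈ I, ‖a i‖ ^ 2)
    {K : ℕ} (I : Fin K → Finset (Fin M))
    (hdisj : ∀ j k, j ≠ k → Disjoint (I j) (I k))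
    (hcover : ∀ i, ∃ j, i ∈ I j)
    (hcard : ∀ j, (I j).card ≤ s)
    (x : H) :
    ((M : ℝ) / ((1 + ε) * N)) * ‖x‖ ^ 2 ≤
      ∑ j, ‖(Submodule.orthogonalProjection (Submodule.span ℂ (φ '' ↑(I j))) x : H)‖ ^ 2 ∧
    ∑ j, ‖(Submodule.orthogonalProjection (Submodule.span ℂ (φ '' ↑(I j))) x : H)‖ ^ 2 ≤
      ((M : ℝ) * (1 + ε) / N) * ‖x‖ ^ 2 := by
  have hpos : (0:ℝ) < 1 + ε := by linarith
  set W : Fin K → Submodule ℂ H := fun j => Submodule.span ℂ (φ '' ↑(I j)) with hW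
  set P : Fin K → H := fun j => (Submodule.orthogonalProjection (W j) x : H) with hP
  -- inner products with x agree with inner products with the projection
  have hrepl : ∀ j, ∀ i ∈ I j, (inner ℂ (φ i) x : ℂ) = inner ℂ (φ i) (P j) := by
    intro j i hi
    have hmem : φ i ∈ W j := Submodule.subset_span ⟨i, hi, rfl⟩
    have h2 : x - P j ∈ (W j)ᗮ := Submodule.sub_starProjection_mem_orthogonal (K := W j) x
    have h3 := (Submodule.mem_orthogonal (W j) (x - P j)).mp h2 (φ i) hmem
    rw [inner_sub_right, sub_eq_zero] at h3
    exact h3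
  -- upper frame bound for any vector
  have keyA : ∀ (J : Finset (Fin M)), J.card ≤ s → ∀ y : H,
      ∑ i ∈ J, ‖(inner ℂ (φ i) y : ℂ)‖ ^ 2 ≤ (1 + ε) * ‖y‖ ^ 2 := by
    intro J hJ y
    set S : ℝ := ∑ i ∈ J, ‖(inner ℂ (φ i) y : ℂ)‖ ^ 2 with hS
    have hS0 : 0 ≤ S := Finset.sum_nonneg fun i _ => sq_nonneg _
    set a : Fin M → ℂ := fun i => inner ℂ (φ i) y with ha
    have h1 : (inner ℂ (∑ i ∈ J, a i • φ i) y : ℂ) = (S : ℂ) := by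
      rw [sum_inner, hS]
      push_cast
      refine Finset.sum_congr rfl fun i _ => ?_
      rw [inner_smul_left]
      exact RCLike.conj_mul (a i)
    have hB := (hRIP J hJ a).2
    have hSa : ∑ i ∈ J, ‖a i‖ ^ 2 = S := rfl
    rw [hSa] at hB
    have h2 : S ≤ ‖∑ i ∈ J, a i • φ i‖ * ‖y‖ := by
      have := norm_inner_le_norm (𝕜 := ℂ) (∑ i ∈ J, a i • φ i) y
      rw [h1] at this
      simpa [abs_of_nonneg hS0, Complex.norm_real] using this
    rcases eq_or_lt_of_le hS0 with h | h
    · rw [← h]; positivity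
    · nlinarith [norm_nonneg (∑ i ∈ J, a i • φ i), norm_nonneg y, sq_nonneg (‖∑ i ∈ J, a i • φ i‖ - ‖y‖)]
  -- lower frame bound on the span
  have keyB : ∀ (J : Finset (Fin M)), J.card ≤ s → ∀ y : H, y ∈ Submodule.span ℂ (φ '' ↑J) →
      ‖y‖ ^ 2 ≤ (1 + ε) * ∑ i ∈ J, ‖(inner ℂ (φ i) y : ℂ)‖ ^ 2 := by
    intro J hJ y hy
    set S : ℝ := ∑ i ∈ J, ‖(inner ℂ (φ i) y : ℂ)‖ ^ 2 with hS
    have hS0 : 0 ≤ S := Finset.sum_nonneg fun i _ => sq_nonneg _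
    rw [Set.image_eq_range, Submodule.mem_span_range_iff_exists_fun ℂ] at hy
    obtain ⟨c, hc⟩ := hy
    set a : Fin M → ℂ := fun i => if h : i ∈ J then c ⟨i, h⟩ else 0 with ha
    have hrep : ∑ i ∈ J, a i • φ i = y := by
      rw [← hc, ← Finset.sum_attach J]
      rw [Finset.univ_eq_attach]
      exact Finset.sum_congr rfl (fun i _ => by simp [ha, i.2])
    have hA := (hRIP J hJ a).1
    rw [hrep] at hA
    -- ‖y‖^2 = inner ℂ (∑ a_i φ_i) y and Cauchy-Schwarz on the sum
    have h1 : (‖y‖ ^ 2 : ℝ) ≤ ∑ i ∈ J, ‖a i‖ * ‖(inner ℂ (φ i) y : ℂ)‖ := by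
      have e1 : (inner ℂ (∑ i ∈ J, a i • φ i) y : ℂ) = ∑ i ∈ J, (starRingEnd ℂ) (a i) * inner ℂ (φ i) y := by
        rw [sum_inner]
        exact Finset.sum_congr rfl fun i _ => by rw [inner_smul_left]
      have e2 : (‖y‖ ^ 2 : ℝ) = ‖(inner ℂ y y : ℂ)‖ := by
        rw [inner_self_eq_norm_sq_to_K]
        simp
      rw [e2]
      conv_lhs => rw [show (inner ℂ y y : ℂ) = ∑ i ∈ J, (starRingEnd ℂ) (a i) * inner ℂ (φ i) y from by rw [← e1, hrep]]
      refine (norm_sum_le _ _).trans ?_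
      refine Finset.sum_le_sum fun i _ => ?_
      rw [norm_mul]
      simp
    have h2 : (∑ i ∈ J, ‖a i‖ * ‖(inner ℂ (φ i) y : ℂ)‖) ^ 2 ≤
        (∑ i ∈ J, ‖a i‖ ^ 2) * S :=
      Finset.sum_mul_sq_le_sq_mul_sq J _ _
    have h3 : ∑ i ∈ J, ‖a i‖ ^ 2 ≤ (1 + ε) * ‖y‖ ^ 2 := by
      have h := mul_le_mul_of_nonneg_left hA hpos.le
      calc ∑ i ∈ J, ‖a i‖ ^ 2 = (1 + ε) * (1 / (1 + ε) * ∑ i ∈ J, ‖a i‖ ^ 2) := by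
            field_simp
        _ ≤ (1 + ε) * ‖y‖ ^ 2 := h
    rcases eq_or_lt_of_le (norm_nonneg y) with h | h
    · simp [← h]; positivity
    · have hL0 : (0:ℝ) ≤ ∑ i ∈ J, ‖a i‖ * ‖(inner ℂ (φ i) y : ℂ)‖ :=
        le_trans (sq_nonneg ‖y‖) h1
      have h4 : ‖y‖ ^ 2 * ‖y‖ ^ 2 ≤ ((1 + ε) * S) * ‖y‖ ^ 2 := by
        nlinarith [mul_le_mul h1 h1 (sq_nonneg ‖y‖) hL0,
          mul_le_mul_of_nonneg_right h3 hS0]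
      exact le_of_mul_le_mul_right h4 (by positivity)
  -- partition sum
  have hsum : ∑ j, ∑ i ∈ I j, ‖(inner ℂ (φ i) x : ℂ)‖ ^ 2 = ((M : ℝ) / N) * ‖x‖ ^ 2 := by
    rw [← htight x]
    have huniv : (Finset.univ : Finset (Fin M)) = Finset.univ.biUnion I := by
      ext i
      simpa using hcover i
    rw [huniv, Finset.sum_biUnion]
    intro j _ k _ hjk
    exact hdisj j k hjk
  have keyAx : ∀ j, ∑ i ∈ I j, ‖(inner ℂ (φ i) x : ℂ)‖ ^ 2 ≤ (1 + ε) * ‖P j‖ ^ 2 := by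
    intro j
    have := keyA (I j) (hcard j) (P j)
    calc ∑ i ∈ I j, ‖(inner ℂ (φ i) x : ℂ)‖ ^ 2
        = ∑ i ∈ I j, ‖(inner ℂ (φ i) (P j) : ℂ)‖ ^ 2 :=
          Finset.sum_congr rfl fun i hi => by rw [hrepl j i hi]
      _ ≤ (1 + ε) * ‖P j‖ ^ 2 := this
  have keyBx : ∀ j, ‖P j‖ ^ 2 ≤ (1 + ε) * ∑ i ∈ I j, ‖(inner ℂ (φ i) x : ℂ)‖ ^ 2 := by
    intro j
    have hmem : P j ∈ W j := SetLike.coe_mem _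
    have := keyB (I j) (hcard j) (P j) hmem
    calc ‖P j‖ ^ 2 ≤ (1 + ε) * ∑ i ∈ I j, ‖(inner ℂ (φ i) (P j) : ℂ)‖ ^ 2 := this
      _ = (1 + ε) * ∑ i ∈ I j, ‖(inner ℂ (φ i) x : ℂ)‖ ^ 2 := by
          congr 1
          exact Finset.sum_congr rfl fun i hi => by rw [hrepl j i hi]
  have hsum1 : ((M : ℝ) / N) * ‖x‖ ^ 2 ≤ (1 + ε) * ∑ j, ‖P j‖ ^ 2 := by
    rw [← hsum, Finset.mul_sum]
    exact Finset.sum_le_sum fun j _ => keyAx j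
  have hsum2 : ∑ j, ‖P j‖ ^ 2 ≤ (1 + ε) * (((M : ℝ) / N) * ‖x‖ ^ 2) := by
    rw [← hsum, Finset.mul_sum]
    exact Finset.sum_le_sum fun j _ => keyBx j
  constructor
  · rw [show ((M : ℝ) / ((1 + ε) * N)) * ‖x‖ ^ 2 = (((M : ℝ) / N) * ‖x‖ ^ 2) / (1 + ε) by
      field_simp]
    rw [div_le_iff₀ hpos]
    linarith [hsum1]
  · calc ∑ j, ‖P j‖ ^ 2 ≤ (1 + ε) * (((M : ℝ) / N) * ‖x‖ ^ 2) := hsum2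
      _ = ((M : ℝ) * (1 + ε) / N) * ‖x‖ ^ 2 := by ring
end

section
/- Let {φ_i}_{i=1}^M be a unit norm tight frame for an N-dimensional complex Hilbert space H_N which has the restricted isometry property with constant ε (0 < ε < 1) for sets of size s, and let {I_j}_{j=1}^K be a partition of {1,2,…,M} with |I_j| ≤ s/2 for every j. Set W_j = span{φ_i : i ∈ I_j}. Then for any j ≠ k and any unit vectors u ∈ W_j and v ∈ W_k one has |⟨u, v⟩| ≤ 2ε(1+ε)²; that is, the fusion frame {(W_j, 1)}_{j=1}^K is 2ε(1+ε)²-nearly orthogonal. -/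
open scoped BigOperators

private lemma span_rep {H : Type*} [NormedAddCommGroup H] [InnerProductSpace ℂ H]
    {M : ℕ} (φ : Fin M → H) (J : Finset (Fin M)) {u : H}
    (hu : u ∈ Submodule.span ℂ (φ '' ↑J)) :
    ∃ a : Fin M → ℂ, (∀ i, i ∉ J → a i = 0) ∧ ∑ i ∈ J, a i • φ i = u := by
  rw [Finsupp.mem_span_image_iff_linearCombination] at hu
  obtain ⟨l, hl, hlu⟩ := hu
  rw [Finsupp.mem_supported'] at hl
  refine ⟨l, fun i hi => hl i (by simpa using hi), ?_⟩
  rw [← hlu, Finsupp.linearCombination_apply, Finsupp.sum]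
  refine (Finset.sum_subset ?_ ?_).symm
  · intro i hi
    by_contra h
    exact (Finsupp.mem_support_iff.mp hi) (hl i (by simpa using h))
  · intro i _ hi
    rw [Finsupp.notMem_support_iff.mp hi, zero_smul]

/-- A unit norm tight frame with RIP constant ε for sets of size s,
partitioned into blocks of size ≤ s/2, produces block spans which form a
2ε(1+ε)²-nearly orthogonal fusion frame. -/
theorem rip_nearly_orthogonal_fusion_frame {H : Type*} [NormedAddCommGroup H]
    [InnerProductSpace ℂ H] [FiniteDimensional ℂ H]
    {N M : ℕ} (hN : Module.finrank ℂ H = N)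
    (φ : Fin M → H) (hnorm : ∀ i, ‖φ i‖ = 1)
    (htight : ∀ x : H, ∑ i, ‖(inner ℂ (φ i) x : ℂ)‖ ^ 2 = ((M : ℝ) / N) * ‖x‖ ^ 2)
    (ε : ℝ) (hε0 : 0 < ε) (hε1 : ε < 1) (s : ℕ) (hsN : s ≤ N)
    (hRIP : ∀ I : Finset (Fin M), I.card ≤ s → ∀ a : Fin M → ℂ,
      (1 / (1 + ε)) * ∑ i ∈ I, ‖a i‖ ^ 2 ≤ ‖∑ i ∈ I, a i • φ i‖ ^ 2 ∧
      ‖∑ i ∈ I, a i • φ i‖ ^ 2 ≤ (1 + ε) * ∑ i ∈ I, ‖a i‖ ^ 2)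
    {K : ℕ} (I : Fin K → Finset (Fin M))
    (hdisj : ∀ j k, j ≠ k → Disjoint (I j) (I k))
    (hcover : ∀ i, ∃ j, i ∈ I j)
    (hcard : ∀ j, ((I j).card : ℝ) ≤ (s : ℝ) / 2) :
    ∀ j k, j ≠ k → ∀ u v : H,
      u ∈ Submodule.span ℂ (φ '' ↑(I j)) → v ∈ Submodule.span ℂ (φ '' ↑(I k)) →
      ‖u‖ = 1 → ‖v‖ = 1 →
      ‖(inner ℂ u v : ℂ)‖ ≤ 2 * ε * (1 + ε) ^ 2 := by
  intro j k hjk u v hu hv hu1 hv1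
  obtain ⟨a, ha0, hau⟩ := span_rep φ (I j) hu
  obtain ⟨b, hb0, hbv⟩ := span_rep φ (I k) hv
  set z : ℂ := inner ℂ u v with hz
  by_cases hz0 : z = 0
  · rw [hz0, norm_zero]; positivity
  -- the unimodular phase
  set μ : ℂ := (starRingEnd ℂ) z / ‖z‖ with hμ
  have hznorm : (0:ℝ) < ‖z‖ := norm_pos_iff.mpr hz0
  have hμnorm : ‖μ‖ = 1 := by
    rw [hμ, norm_div, RingHomIsometric.norm_map]
    simp only [Complex.norm_real, Real.norm_eq_abs, abs_norm]
    exact div_self hznorm.ne'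
  have hμz : μ * z = (‖z‖ : ℂ) := by
    rw [hμ, div_mul_eq_mul_div, Complex.conj_mul']
    rw [show ((‖z‖ : ℂ) ^ 2) = (‖z‖ : ℂ) * ‖z‖ by ring]
    rw [mul_div_assoc, div_self (by exact_mod_cast hznorm.ne'), mul_one]
  have hdjk : Disjoint (I j) (I k) := hdisj j k hjk
  set U : Finset (Fin M) := I j ∪ I k with hU
  have hUcard : U.card ≤ s := by
    have : ((U.card : ℝ)) ≤ s := by
      rw [hU, Finset.card_union_of_disjoint hdjk]
      push_cast
      have := hcard j; have := hcard k; linarith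
    exact_mod_cast this
  -- sum decompositions
  have key : ∀ μ' : ℂ, ∑ i ∈ U, (a i + μ' * b i) • φ i = u + μ' • v ∧
      ∑ i ∈ U, ‖a i + μ' * b i‖ ^ 2
        = (∑ i ∈ I j, ‖a i‖ ^ 2) + ∑ i ∈ I k, ‖μ' * b i‖ ^ 2 := by
    intro μ'
    constructor
    · have h1 : ∑ i ∈ U, a i • φ i = u := by
        rw [← hau]
        refine (Finset.sum_subset Finset.subset_union_left ?_).symm
        intro i _ hi; rw [ha0 i hi, zero_smul]
      have h2 : ∑ i ∈ U, (μ' * b i) • φ i = μ' • v := by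
        have : ∑ i ∈ U, (μ' * b i) • φ i = ∑ i ∈ I k, (μ' * b i) • φ i := by
          refine (Finset.sum_subset Finset.subset_union_right ?_).symm
          intro i _ hi; rw [hb0 i hi, mul_zero, zero_smul]
        rw [this, ← hbv, Finset.smul_sum]
        exact Finset.sum_congr rfl fun i _ => by rw [mul_smul]
      calc ∑ i ∈ U, (a i + μ' * b i) • φ i
          = ∑ i ∈ U, (a i • φ i + (μ' * b i) • φ i) :=
            Finset.sum_congr rfl fun i _ => add_smul _ _ _
        _ = u + μ' • v := by rw [Finset.sum_add_distrib, h1, h2]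
    · rw [hU, Finset.sum_union hdjk]
      congr 1
      · refine Finset.sum_congr rfl fun i hi => ?_
        rw [hb0 i (Finset.disjoint_left.mp hdjk hi), mul_zero, add_zero]
      · refine Finset.sum_congr rfl fun i hi => ?_
        rw [ha0 i (Finset.disjoint_right.mp hdjk hi), zero_add]
  set A : ℝ := ∑ i ∈ I j, ‖a i‖ ^ 2 with hA
  set B : ℝ := ∑ i ∈ I k, ‖b i‖ ^ 2 with hB
  have hBμ : ∀ μ' : ℂ, ‖μ'‖ = 1 → ∑ i ∈ I k, ‖μ' * b i‖ ^ 2 = B := by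
    intro μ' h
    refine Finset.sum_congr rfl fun i _ => by rw [norm_mul, h, one_mul]
  -- RIP applied to the two combined vectors
  have hplus := (hRIP U hUcard (fun i => a i + μ * b i)).2
  have hminus := (hRIP U hUcard (fun i => a i + (-μ) * b i)).1
  rw [(key μ).1, (key μ).2, hBμ μ hμnorm] at hplus
  rw [(key (-μ)).1, (key (-μ)).2, hBμ (-μ) (by rwa [norm_neg])] at hminus
  -- compute the two norms via polarization
  have hinner : RCLike.re (inner ℂ u (μ • v) : ℂ) = ‖z‖ := by
    rw [inner_smul_right, ← hz, hμz]
    simp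
  have hμv : ‖μ • v‖ = 1 := by rw [norm_smul, hμnorm, hv1, one_mul]
  have hpl : ‖u + μ • v‖ ^ 2 = 2 + 2 * ‖z‖ := by
    rw [norm_add_sq (𝕜 := ℂ), hinner, hu1, hμv]; ring
  have hmn : ‖u + (-μ) • v‖ ^ 2 = 2 - 2 * ‖z‖ := by
    have : u + (-μ) • v = u - μ • v := by rw [neg_smul, ← sub_eq_add_neg]
    rw [this, norm_sub_sq (𝕜 := ℂ), hinner, hu1, hμv]; ring
  rw [hpl] at hplus
  rw [hmn] at hminus
  have hε1' : (0:ℝ) < 1 + ε := by linarith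
  rw [div_mul_eq_mul_div, one_mul, div_le_iff₀ hε1'] at hminus
  nlinarith [norm_nonneg z, sq_nonneg ε]
end

section
/- Let W_1, W_2 be subspaces of an N-dimensional complex Hilbert space H_N, let 0 < ε < 1, and let T : W_1 → W_2 be a surjective linear map satisfying ‖φ − Tφ‖² ≤ ε‖φ‖² for all φ ∈ W_1. Let P_1 be the orthogonal projection of H_N onto W_1. Then ‖ψ − P_1ψ‖² ≤ (4ε/(1−ε)²) ‖ψ‖² for all ψ ∈ W_2. -/
/-- If T : W₁ → W₂ is a surjective linear map with ‖φ − Tφ‖² ≤ ε‖φ‖²,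
then every ψ ∈ W₂ satisfies ‖ψ − P₁ψ‖² ≤ (4ε/(1−ε)²)‖ψ‖², where P₁ is the
orthogonal projection onto W₁. -/
theorem near_identity_projection_bound {H : Type*} [NormedAddCommGroup H]
    [InnerProductSpace ℂ H] [FiniteDimensional ℂ H]
    (W₁ W₂ : Submodule ℂ H) (ε : ℝ) (hε0 : 0 < ε) (hε1 : ε < 1)
    (T : W₁ →ₗ[ℂ] W₂) (hsurj : Function.Surjective T)
    (hT : ∀ φ : W₁, ‖(φ : H) - ((T φ : W₂) : H)‖ ^ 2 ≤ ε * ‖(φ : H)‖ ^ 2) :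
    ∀ ψ : W₂, ‖(ψ : H) - ((Submodule.orthogonalProjection W₁ (ψ : H) : W₁) : H)‖ ^ 2 ≤
      (4 * ε / (1 - ε) ^ 2) * ‖(ψ : H)‖ ^ 2 := by
  intro ψ
  obtain ⟨φ, rfl⟩ := hsurj ψ
  set s := Real.sqrt ε with hs
  have hs0 : 0 < s := Real.sqrt_pos.mpr hε0
  have hs2 : s ^ 2 = ε := Real.sq_sqrt hε0.le
  have hs1 : s < 1 := by
    nlinarith [hs2, Real.sqrt_nonneg ε]
  -- ‖φ - Tφ‖ ≤ s * ‖φ‖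
  have hkey : ‖(φ : H) - ((T φ : W₂) : H)‖ ≤ s * ‖(φ : H)‖ := by
    have h := hT φ
    have h2 : ‖(φ : H) - ((T φ : W₂) : H)‖ ^ 2 ≤ (s * ‖(φ : H)‖) ^ 2 := by
      rw [mul_pow, hs2]; exact h
    nlinarith [h2, norm_nonneg ((φ : H) - ((T φ : W₂) : H)), mul_nonneg hs0.le (norm_nonneg (φ : H))]
  -- ‖φ‖ ≤ ‖Tφ‖ / (1 - s)
  have hφTφ : (1 - s) * ‖(φ : H)‖ ≤ ‖((T φ : W₂) : H)‖ := by
    have h1 : ‖(φ : H)‖ ≤ ‖((T φ : W₂) : H)‖ + ‖(φ : H) - ((T φ : W₂) : H)‖ := by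
      have := norm_sub_norm_le ((φ : H)) (((T φ : W₂) : H))
      have h3 := norm_add_le (((T φ : W₂) : H)) ((φ : H) - ((T φ : W₂) : H))
      simpa using h3
    nlinarith [hkey]
  -- minimality of projection
  have hmin : ‖((T φ : W₂) : H) - ((Submodule.orthogonalProjection W₁ ((T φ : W₂) : H) : W₁) : H)‖ ≤
      ‖((T φ : W₂) : H) - (φ : H)‖ := by
    rw [← Submodule.starProjection_apply, Submodule.starProjection_minimal]
    exact ciInf_le ⟨0, fun x => by rintro ⟨y, rfl⟩; positivity⟩ φ
  have hmin2 : ‖((T φ : W₂) : H) - ((Submodule.orthogonalProjection W₁ ((T φ : W₂) : H) : W₁) : H)‖ ≤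
      s * ‖(φ : H)‖ := by
    calc _ ≤ ‖((T φ : W₂) : H) - (φ : H)‖ := hmin
    _ = ‖(φ : H) - ((T φ : W₂) : H)‖ := norm_sub_rev _ _
    _ ≤ s * ‖(φ : H)‖ := hkey
  have h1s : (0:ℝ) < 1 - s := by linarith
  have hbound : (1 - s) * ‖((T φ : W₂) : H) - ((Submodule.orthogonalProjection W₁ ((T φ : W₂) : H) : W₁) : H)‖
      ≤ s * ‖((T φ : W₂) : H)‖ := by
    calc (1 - s) * ‖((T φ : W₂) : H) - ((Submodule.orthogonalProjection W₁ ((T φ : W₂) : H) : W₁) : H)‖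
        ≤ (1 - s) * (s * ‖(φ : H)‖) := by
          exact mul_le_mul_of_nonneg_left hmin2 h1s.le
    _ = s * ((1 - s) * ‖(φ : H)‖) := by ring
    _ ≤ s * ‖((T φ : W₂) : H)‖ := mul_le_mul_of_nonneg_left hφTφ hs0.le
  -- now square and compare constants
  set A := ‖((T φ : W₂) : H) - ((Submodule.orthogonalProjection W₁ ((T φ : W₂) : H) : W₁) : H)‖
  set B := ‖((T φ : W₂) : H)‖
  have hA : 0 ≤ A := norm_nonneg _
  have hB : 0 ≤ B := norm_nonneg _
  have hsq : (1 - s)^2 * A^2 ≤ s^2 * B^2 := by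
    nlinarith [mul_le_mul hbound hbound (mul_nonneg h1s.le hA) (mul_nonneg hs0.le hB)]
  -- (1-ε)^2 = (1-s)^2 (1+s)^2 ≤ 4 (1-s)^2
  have hε : 1 - ε = (1 - s) * (1 + s) := by nlinarith [hs2]
  have h1ε : (0:ℝ) < 1 - ε := by linarith
  rw [div_mul_eq_mul_div, ge_iff_le.symm, ge_iff_le, le_div_iff₀ (by positivity)]
  have h2 : (1 + s) ^ 2 ≤ 4 := by nlinarith
  calc A ^ 2 * (1 - ε) ^ 2 = ((1 - s)^2 * A^2) * (1 + s)^2 := by rw [hε]; ring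
  _ ≤ (s^2 * B^2) * 4 := by
      apply mul_le_mul hsq h2 (by positivity) (by positivity)
  _ = 4 * ε * B ^ 2 := by rw [hs2]; ring
end

section
/- Let W_1, W_2 be subspaces of an N-dimensional complex Hilbert space H_N, let 0 < ε < 1, and let T : W_1 → W_2 be a surjective linear map satisfying ‖φ − Tφ‖² ≤ ε‖φ‖² for all φ ∈ W_1. Let P_1 be the orthogonal projection of H_N onto W_1. Then ‖P_1ψ‖² ≥ (1 − 4ε/(1−ε)²) ‖ψ‖² for all ψ ∈ W_2. -/
set_option maxHeartbeats 1000000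


/-- If T : W₁ → W₂ is a surjective linear map with ‖φ − Tφ‖² ≤ ε‖φ‖²,
then every ψ ∈ W₂ satisfies ‖P₁ψ‖² ≥ (1 − 4ε/(1−ε)²)‖ψ‖², where P₁ is the
orthogonal projection onto W₁. -/
theorem near_identity_projection_lower_bound {H : Type*} [NormedAddCommGroup H]
    [InnerProductSpace ℂ H] [FiniteDimensional ℂ H]
    (W₁ W₂ : Submodule ℂ H) (ε : ℝ) (hε0 : 0 < ε) (hε1 : ε < 1)
    (T : W₁ →ₗ[ℂ] W₂) (hsurj : Function.Surjective T)
    (hT : ∀ φ : W₁, ‖(φ : H) - ((T φ : W₂) : H)‖ ^ 2 ≤ ε * ‖(φ : H)‖ ^ 2) :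
    ∀ ψ : W₂, (1 - 4 * ε / (1 - ε) ^ 2) * ‖(ψ : H)‖ ^ 2 ≤
      ‖((Submodule.orthogonalProjection W₁ (ψ : H) : W₁) : H)‖ ^ 2 := by
  intro ψ
  obtain ⟨φ, hφ⟩ := hsurj ψ
  set s := Real.sqrt ε with hs
  have hs2 : s ^ 2 = ε := Real.sq_sqrt hε0.le
  have hs0 : 0 < s := Real.sqrt_pos.2 hε0
  have hs1 : s < 1 := by nlinarith
  set a := ‖(φ : H)‖ with ha
  set b := ‖(ψ : H)‖ with hb
  have ha0 : 0 ≤ a := norm_nonneg _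
  have hb0 : 0 ≤ b := norm_nonneg _
  -- ‖φ - ψ‖ ≤ s * a
  have hφψ : ‖(φ : H) - (ψ : H)‖ ≤ s * a := by
    have h1 := hT φ
    rw [hφ] at h1
    nlinarith [norm_nonneg ((φ : H) - (ψ : H)), mul_nonneg hs0.le ha0]
  -- (1 - s) * a ≤ b
  have hba : (1 - s) * a ≤ b := by
    have := norm_sub_norm_le (φ : H) (ψ : H)
    nlinarith [mul_nonneg hs0.le ha0]
  -- distance to projection
  set d := ‖(ψ : H) - (Submodule.orthogonalProjection W₁ (ψ : H) : H)‖ with hd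
  have hd0 : 0 ≤ d := norm_nonneg _
  have hdle : d ≤ s * a := by
    have hmin : d ≤ ‖(ψ : H) - (φ : H)‖ := by
      rw [hd, show ((Submodule.orthogonalProjection W₁ (ψ : H) : W₁) : H) = W₁.starProjection (ψ : H) from rfl,
        Submodule.starProjection_minimal]
      exact ciInf_le_of_le ⟨0, Set.forall_mem_range.2 fun x => norm_nonneg _⟩ φ le_rfl
    rw [norm_sub_rev] at hmin
    exact hmin.trans hφψ
  -- Pythagoras
  set p := ‖((Submodule.orthogonalProjection W₁ (ψ : H) : W₁) : H)‖ with hp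
  have hpyth : b ^ 2 = p ^ 2 + d ^ 2 := by
    have h1 := Submodule.norm_sq_eq_add_norm_sq_projection (ψ : H) W₁
    have h2 : ((Submodule.orthogonalProjection W₁ᗮ (ψ : H)) : H) =
        (ψ : H) - (Submodule.orthogonalProjection W₁ (ψ : H) : H) :=
      Submodule.starProjection_orthogonal_val _
    rw [hb, hp, hd, ← h2]
    simpa using h1
  clear_value s a b d p
  have h1ε : (0:ℝ) < (1 - ε) ^ 2 := pow_pos (by linarith) 2
  have hd2 : d ^ 2 ≤ s ^ 2 * a ^ 2 := by nlinarith [mul_nonneg hs0.le ha0]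
  have hab2 : (1 - s) ^ 2 * a ^ 2 ≤ b ^ 2 := by
    have h := pow_le_pow_left₀ (by nlinarith : (0:ℝ) ≤ (1 - s) * a) hba 2
    rwa [mul_pow] at h
  have hfac : (1 - ε) = (1 - s) * (1 + s) := by rw [← hs2]; ring
  have key : d ^ 2 * (1 - ε) ^ 2 ≤ 4 * ε * b ^ 2 := by
    have t1 : d ^ 2 * (1 - ε) ^ 2 ≤ s ^ 2 * a ^ 2 * (1 - ε) ^ 2 :=
      mul_le_mul_of_nonneg_right hd2 h1ε.le
    have t2 : s ^ 2 * a ^ 2 * (1 - ε) ^ 2 = ε * ((1 - s) ^ 2 * a ^ 2) * (1 + s) ^ 2 := by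
      rw [hfac, ← hs2]; ring
    have t3 : ε * ((1 - s) ^ 2 * a ^ 2) * (1 + s) ^ 2 ≤ ε * b ^ 2 * (1 + s) ^ 2 :=
      mul_le_mul_of_nonneg_right (mul_le_mul_of_nonneg_left hab2 hε0.le) (sq_nonneg _)
    have t4 : ε * b ^ 2 * (1 + s) ^ 2 ≤ 4 * ε * b ^ 2 := by
      nlinarith [mul_nonneg hε0.le (sq_nonneg b)]
    linarith
  have hD : d ^ 2 ≤ 4 * ε / (1 - ε) ^ 2 * b ^ 2 := by
    rw [div_mul_eq_mul_div, le_div_iff₀ h1ε]; linarith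
  have hexp : (1 - 4 * ε / (1 - ε) ^ 2) * b ^ 2 = b ^ 2 - 4 * ε / (1 - ε) ^ 2 * b ^ 2 := by
    ring
  rw [hexp]; linarith
end

section
/- Let {φ_i}_{i=1}^M be a family of vectors in an N-dimensional complex Hilbert space H_N with the restricted isometry property with constant ε (0 < ε < 1) for sets of size s. Partition {1,…,M} into sets {I_j}_{j=1}^K with |I_j| ≤ s for all j, and for each j let S_j denote the frame operator of {φ_i}_{i∈I_j} regarded as a positive invertible operator on W_j = span{φ_i : i ∈ I_j}. Fix K_1 ≤ K and define ψ_i = S_j^{−1/2} φ_i for i ∈ I_j with j ≤ K_1, and ψ_i = φ_i for i ∈ I_j with K_1+1 ≤ j ≤ K. Then for every J ⊆ {1,…,M} with |J| ≤ s and all scalars (a_i)_{i∈J}: ‖Σ_{i∈J} a_i ψ_i‖ ≤ [(1+ε)^{3/2} + 4ε(1+ε)√K_1] (Σ_{i∈J} |a_i|²)^{1/2}. -/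
open scoped BigOperators

set_option maxSynthPendingDepth 3
set_option maxHeartbeats 1000000

section Aux

variable {E : Type*} [NormedAddCommGroup E] [InnerProductSpace ℂ E] [CompleteSpace E]

open scoped InnerProductSpace

private lemma aux_algebraMap_apply (r : ℝ) (x : E) :
    (algebraMap ℝ (E →L[ℂ] E) r) x = (r : ℂ) • x := by
  simp [Algebra.algebraMap_eq_smul_one]

private lemma aux_loewner_le (S : E →L[ℂ] E) (m : ℝ) (hsa : IsSelfAdjoint S)
    (h : ∀ x : E, m * ‖x‖ ^ 2 ≤ RCLike.re ⟪S x, x⟫_ℂ) :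
    algebraMap ℝ (E →L[ℂ] E) m ≤ S := by
  rw [ContinuousLinearMap.le_def]
  refine ⟨ContinuousLinearMap.isSelfAdjoint_iff_isSymmetric.mp
    (hsa.sub (IsSelfAdjoint.algebraMap _ (isSelfAdjoint_iff.mpr (star_trivial m)))),
    fun x => ?_⟩
  rw [ContinuousLinearMap.reApplyInnerSelf_apply]
  have hsub : (S - algebraMap ℝ (E →L[ℂ] E) m) x = S x - (m : ℂ) • x := by
    rw [ContinuousLinearMap.sub_apply, aux_algebraMap_apply]
  rw [hsub, inner_sub_left, map_sub]
  have h2 : RCLike.re ⟪(m : ℂ) • x, x⟫_ℂ = m * ‖x‖ ^ 2 := by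
    rw [inner_smul_left]
    simp [inner_self_eq_norm_sq]
    left; norm_cast
  rw [h2]
  linarith [h x]

private lemma aux_loewner_ge (S : E →L[ℂ] E) (r : ℝ) (hsa : IsSelfAdjoint S)
    (h : ∀ x : E, RCLike.re ⟪S x, x⟫_ℂ ≤ r * ‖x‖ ^ 2) :
    S ≤ algebraMap ℝ (E →L[ℂ] E) r := by
  have h0 : algebraMap ℝ (E →L[ℂ] E) 0 ≤ algebraMap ℝ (E →L[ℂ] E) r - S := by
    refine aux_loewner_le _ 0 ?_ fun x => ?_
    · exact (IsSelfAdjoint.algebraMap _ (isSelfAdjoint_iff.mpr (star_trivial r))).sub hsa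
    · have hsub : (algebraMap ℝ (E →L[ℂ] E) r - S) x = (r : ℂ) • x - S x := by
        rw [ContinuousLinearMap.sub_apply, aux_algebraMap_apply]
      rw [hsub, inner_sub_left, map_sub]
      have h2 : RCLike.re ⟪(r : ℂ) • x, x⟫_ℂ = r * ‖x‖ ^ 2 := by
        rw [inner_smul_left]
        simp [inner_self_eq_norm_sq]
        left; norm_cast
      rw [h2]
      have := h x
      nlinarith [h x]
  rw [map_zero] at h0
  exact sub_nonneg.mp h0

private lemma aux_pt (ε t : ℝ) (hε0 : 0 < ε) (hε1 : ε < 1)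
    (h1 : 1 / (1 + ε) ≤ t) (h2 : t ≤ 1 + ε) : |(Real.sqrt t)⁻¹ - 1| ≤ ε := by
  have hε1' : (0:ℝ) < 1 + ε := by linarith
  have ht0 : 0 < t := lt_of_lt_of_le (by positivity) h1
  have hst : 0 < Real.sqrt t := Real.sqrt_pos.mpr ht0
  have hs7 : 0 < Real.sqrt (1 + ε) := Real.sqrt_pos.mpr hε1'
  have hs1 : Real.sqrt (1 + ε) ≤ 1 + ε := by
    have hsq : Real.sqrt (1 + ε) ^ 2 = 1 + ε := Real.sq_sqrt hε1'.le
    have hone : (1:ℝ) ≤ Real.sqrt (1 + ε) := Real.one_le_sqrt.mpr (by linarith)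
    nlinarith
  rw [abs_le]
  constructor
  · -- 1 - ε ≤ (√t)⁻¹
    have hsc : Real.sqrt t ≤ 1 + ε := le_trans (Real.sqrt_le_sqrt h2) hs1
    have h3 : (1 + ε)⁻¹ ≤ (Real.sqrt t)⁻¹ := inv_anti₀ hst hsc
    have h4 : 1 - ε ≤ (1 + ε)⁻¹ := by
      rw [inv_eq_one_div, le_div_iff₀ hε1']
      nlinarith
    linarith
  · -- (√t)⁻¹ ≤ 1 + ε
    have h5 : 1 / Real.sqrt (1 + ε) ≤ Real.sqrt t := by
      have := Real.sqrt_le_sqrt h1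
      rwa [one_div, Real.sqrt_inv, ← one_div] at this
    have h6 : (Real.sqrt t)⁻¹ ≤ Real.sqrt (1 + ε) := by
      rw [inv_eq_one_div, div_le_iff₀ hst]
      calc (1:ℝ) = Real.sqrt (1 + ε) * (1 / Real.sqrt (1 + ε)) := by field_simp
        _ ≤ Real.sqrt (1 + ε) * Real.sqrt t := mul_le_mul_of_nonneg_left h5 hs7.le
    linarith

private lemma aux_opnorm (S : E →L[ℂ] E) (hsa : IsSelfAdjoint S) (ε : ℝ)
    (hε0 : 0 < ε) (hε1 : ε < 1)
    (hsp : ∀ t ∈ spectrum ℝ S, 1 / (1 + ε) ≤ t ∧ t ≤ 1 + ε) :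
    ‖cfc (fun t : ℝ => (Real.sqrt t)⁻¹) S - 1‖ ≤ ε := by
  have hε1' : (0:ℝ) < 1 + ε := by linarith
  have hc : ContinuousOn (fun t : ℝ => (Real.sqrt t)⁻¹) (spectrum ℝ S) :=
    Real.continuous_sqrt.continuousOn.inv₀ fun t ht => by
      have h1 := (hsp t ht).1
      have ht0 : 0 < t := lt_of_lt_of_le (by positivity) h1
      positivity
  have h1 : (1 : (E →L[ℂ] E)) = cfc (fun _ : ℝ => (1:ℝ)) S := (cfc_one ℝ S).symm
  rw [h1, ← cfc_sub _ _ S hc (by fun_prop)]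
  exact norm_cfc_le hε0.le fun t ht => by
    simpa using aux_pt ε t hε0 hε1 (hsp t ht).1 (hsp t ht).2

end Aux

/-- upper bound: Replacing the first K₁ blocks of an RIP family by the
orthonormal sets S_j^{−1/2}φ_i keeps an upper RIP-type bound with constant
(1+ε)^{3/2} + 4ε(1+ε)√K₁. -/
theorem rip_orthonormal_replacement_upper {H : Type*} [NormedAddCommGroup H]
    [InnerProductSpace ℂ H] [FiniteDimensional ℂ H]
    {N : ℕ} (hN : Module.finrank ℂ H = N)
    {M : ℕ} (φ : Fin M → H) (ε : ℝ) (hε0 : 0 < ε) (hε1 : ε < 1) (s : ℕ)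
    (hRIP : ∀ I : Finset (Fin M), I.card ≤ s → ∀ a : Fin M → ℂ,
      (1 / (1 + ε)) * ∑ i ∈ I, ‖a i‖ ^ 2 ≤ ‖∑ i ∈ I, a i • φ i‖ ^ 2 ∧
      ‖∑ i ∈ I, a i • φ i‖ ^ 2 ≤ (1 + ε) * ∑ i ∈ I, ‖a i‖ ^ 2)
    {K : ℕ} (I : Fin K → Finset (Fin M))
    (hdisj : ∀ j k, j ≠ k → Disjoint (I j) (I k))
    (hcover : ∀ i, ∃ j, i ∈ I j)
    (hcard : ∀ j, (I j).card ≤ s)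
    (W : Fin K → Submodule ℂ H)
    (hW : ∀ j, W j = Submodule.span ℂ (φ '' ↑(I j)))
    (hmem : ∀ j, ∀ i ∈ I j, φ i ∈ W j)
    (S : ∀ j, (W j) →L[ℂ] (W j))
    (hS : ∀ j (x : W j), ((S j x : W j) : H) = ∑ i ∈ I j, (inner ℂ (φ i) (x : H) : ℂ) • φ i)
    (K₁ : ℕ) (hK₁ : K₁ ≤ K)
    (ψ : Fin M → H)
    (hψ : ∀ (j : Fin K) (i : Fin M) (hi : i ∈ I j),
      ψ i = if (j : ℕ) < K₁
        then (((cfc (fun t : ℝ => (Real.sqrt t)⁻¹) (S j)) ⟨φ i, hmem j i hi⟩ : W j) : H)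
        else φ i)
    (J : Finset (Fin M)) (hJ : J.card ≤ s) (a : Fin M → ℂ) :
    ‖∑ i ∈ J, a i • ψ i‖ ≤
      ((1 + ε) ^ ((3 : ℝ) / 2) + 4 * ε * (1 + ε) * Real.sqrt K₁) *
        Real.sqrt (∑ i ∈ J, ‖a i‖ ^ 2) := by
  have hε1' : (0:ℝ) < 1 + ε := by linarith
  -- surjectivity of synthesis onto W j
  have hsurj : ∀ j (x : W j), ∃ c : Fin M → ℂ, ∑ i ∈ I j, c i • φ i = (x : H) := by
    intro j x
    let T : (Fin M → ℂ) →ₗ[ℂ] H :=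
      { toFun := fun c => ∑ i ∈ I j, c i • φ i
        map_add' := fun c d => by simp [add_smul, Finset.sum_add_distrib]
        map_smul' := fun r c => by simp [Finset.smul_sum, smul_smul] }
    have hle : W j ≤ LinearMap.range T := by
      rw [hW j, Submodule.span_le]
      rintro v ⟨i, hi, rfl⟩
      replace hi : i ∈ I j := hi
      refine ⟨fun k => if k = i then 1 else 0, ?_⟩
      show ∑ k ∈ I j, (if k = i then (1:ℂ) else 0) • φ k = φ i
      simp only [ite_smul, one_smul, zero_smul]
      rw [Finset.sum_ite_eq' (I j) i φ, if_pos hi]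
    obtain ⟨c, hc⟩ := hle x.2
    exact ⟨c, hc⟩
  -- quadratic form of S j
  have hQc : ∀ j (x : W j),
      (inner ℂ ((x : W j) : H) ((S j x : W j) : H) : ℂ)
        = ((∑ i ∈ I j, ‖(inner ℂ (φ i) ((x : W j) : H) : ℂ)‖ ^ 2 : ℝ) : ℂ) := by
    intro j x
    rw [hS j x, inner_sum, Complex.ofReal_sum]
    refine Finset.sum_congr rfl fun i hi => ?_
    rw [inner_smul_right, ← inner_conj_symm ((x : W j) : H) (φ i), RCLike.mul_conj]
    norm_cast
  have hQ0 : ∀ j (x : W j), (0:ℝ) ≤ ∑ i ∈ I j, ‖(inner ℂ (φ i) ((x : W j) : H) : ℂ)‖ ^ 2 :=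
    fun j x => Finset.sum_nonneg fun i _ => by positivity
  have hre : ∀ j (x : W j),
      RCLike.re (inner ℂ ((x : W j) : H) ((S j x : W j) : H) : ℂ)
        = ∑ i ∈ I j, ‖(inner ℂ (φ i) ((x : W j) : H) : ℂ)‖ ^ 2 := by
    intro j x; rw [hQc]; exact Complex.ofReal_re _
  -- upper quadratic bound
  have hQup : ∀ j (x : W j),
      (∑ i ∈ I j, ‖(inner ℂ (φ i) ((x : W j) : H) : ℂ)‖ ^ 2) ≤ (1 + ε) * ‖((x : W j) : H)‖ ^ 2 := by
    intro j x
    set q := ∑ i ∈ I j, ‖(inner ℂ (φ i) ((x : W j) : H) : ℂ)‖ ^ 2 with hq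
    have h1 : q ≤ ‖((x : W j) : H)‖ * ‖((S j x : W j) : H)‖ := by
      calc q = RCLike.re (inner ℂ ((x : W j) : H) ((S j x : W j) : H) : ℂ) := (hre j x).symm
        _ ≤ ‖(inner ℂ ((x : W j) : H) ((S j x : W j) : H) : ℂ)‖ := RCLike.re_le_norm _
        _ ≤ _ := norm_inner_le_norm _ _
    have h2 : ‖((S j x : W j) : H)‖ ^ 2 ≤ (1 + ε) * q := by
      rw [hS j x]
      exact (hRIP (I j) (hcard j) (fun i => (inner ℂ (φ i) ((x : W j) : H) : ℂ))).2
    rcases (hQ0 j x).eq_or_lt with hq0 | hq0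
    · rw [hq, ← hq0]; positivity
    · have e1 : q ^ 2 ≤ (‖((x : W j) : H)‖ * ‖((S j x : W j) : H)‖) ^ 2 :=
        pow_le_pow_left₀ (hQ0 j x) h1 2
      have e2 : (‖((x : W j) : H)‖ * ‖((S j x : W j) : H)‖) ^ 2
          = ‖((x : W j) : H)‖ ^ 2 * ‖((S j x : W j) : H)‖ ^ 2 := mul_pow _ _ 2
      have e3 : ‖((x : W j) : H)‖ ^ 2 * ‖((S j x : W j) : H)‖ ^ 2
          ≤ ‖((x : W j) : H)‖ ^ 2 * ((1 + ε) * q) :=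
        mul_le_mul_of_nonneg_left h2 (sq_nonneg _)
      have e4 : q * q ≤ ((1 + ε) * ‖((x : W j) : H)‖ ^ 2) * q := by nlinarith [e1, e2, e3]
      exact le_of_mul_le_mul_right e4 hq0
  -- lower quadratic bound
  have hQlow : ∀ j (x : W j),
      ‖((x : W j) : H)‖ ^ 2 ≤ (1 + ε) * ∑ i ∈ I j, ‖(inner ℂ (φ i) ((x : W j) : H) : ℂ)‖ ^ 2 := by
    intro j x
    set q := ∑ i ∈ I j, ‖(inner ℂ (φ i) ((x : W j) : H) : ℂ)‖ ^ 2 with hq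
    obtain ⟨c, hc⟩ := hsurj j x
    have h1 : ‖((x : W j) : H)‖ ^ 2 ≤
        ∑ i ∈ I j, ‖c i‖ * ‖(inner ℂ (φ i) ((x : W j) : H) : ℂ)‖ := by
      have e1 : (‖((x : W j) : H)‖ : ℝ) ^ 2 =
          RCLike.re (inner ℂ ((x : W j) : H) ((x : W j) : H) : ℂ) :=
        (inner_self_eq_norm_sq _).symm
      rw [e1]
      nth_rewrite 1 [← hc]
      rw [sum_inner]
      calc RCLike.re (∑ i ∈ I j, (inner ℂ (c i • φ i) ((x : W j) : H) : ℂ))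
          ≤ ‖(∑ i ∈ I j, (inner ℂ (c i • φ i) ((x : W j) : H) : ℂ))‖ := RCLike.re_le_norm _
        _ ≤ ∑ i ∈ I j, ‖(inner ℂ (c i • φ i) ((x : W j) : H) : ℂ)‖ := norm_sum_le _ _
        _ ≤ ∑ i ∈ I j, ‖c i‖ * ‖(inner ℂ (φ i) ((x : W j) : H) : ℂ)‖ := by
            refine Finset.sum_le_sum fun i hi => ?_
            rw [inner_smul_left, norm_mul, RCLike.norm_conj]
    have h2 : (∑ i ∈ I j, ‖c i‖ * ‖(inner ℂ (φ i) ((x : W j) : H) : ℂ)‖) ^ 2 ≤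
        (∑ i ∈ I j, ‖c i‖ ^ 2) * q :=
      Finset.sum_mul_sq_le_sq_mul_sq (I j) _ _
    have h3 : ∑ i ∈ I j, ‖c i‖ ^ 2 ≤ (1 + ε) * ‖((x : W j) : H)‖ ^ 2 := by
      have h4 := (hRIP (I j) (hcard j) c).1
      rw [hc] at h4
      calc ∑ i ∈ I j, ‖c i‖ ^ 2 = (1 + ε) * ((1 / (1 + ε)) * ∑ i ∈ I j, ‖c i‖ ^ 2) := by
            field_simp
        _ ≤ (1 + ε) * ‖((x : W j) : H)‖ ^ 2 := mul_le_mul_of_nonneg_left h4 (by linarith)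
    have hs0 : 0 ≤ ∑ i ∈ I j, ‖c i‖ * ‖(inner ℂ (φ i) ((x : W j) : H) : ℂ)‖ :=
      Finset.sum_nonneg fun i _ => by positivity
    rcases (sq_nonneg ‖((x : W j) : H)‖).eq_or_lt with hn | hn
    · rw [← hn]
      have := hQ0 j x
      positivity
    · have e1 : (‖((x : W j) : H)‖ ^ 2) ^ 2
          ≤ (∑ i ∈ I j, ‖c i‖ * ‖(inner ℂ (φ i) ((x : W j) : H) : ℂ)‖) ^ 2 :=
        pow_le_pow_left₀ (sq_nonneg _) h1 2
      have e3 : (∑ i ∈ I j, ‖c i‖ ^ 2) * q ≤ ((1 + ε) * ‖((x : W j) : H)‖ ^ 2) * q :=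
        mul_le_mul_of_nonneg_right h3 (hQ0 j x)
      have e4 : ‖((x : W j) : H)‖ ^ 2 * ‖((x : W j) : H)‖ ^ 2
          ≤ ((1 + ε) * q) * ‖((x : W j) : H)‖ ^ 2 := by nlinarith [e1, h2, e3]
      exact le_of_mul_le_mul_right e4 hn
  -- selfadjointness
  have hSA : ∀ j, IsSelfAdjoint (S j) := by
    intro j
    rw [ContinuousLinearMap.isSelfAdjoint_iff_isSymmetric]
    intro x y
    show (inner ℂ ((S j x : W j) : H) ((y : W j) : H) : ℂ) =
      (inner ℂ ((x : W j) : H) ((S j y : W j) : H) : ℂ)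
    rw [hS j x, hS j y, sum_inner, inner_sum]
    refine Finset.sum_congr rfl fun i hi => ?_
    rw [inner_smul_left, inner_smul_right, ← inner_conj_symm ((x : W j) : H) (φ i)]
    ring
  -- spectrum bounds
  have hspec : ∀ j, ∀ t ∈ spectrum ℝ (S j), 1 / (1 + ε) ≤ t ∧ t ≤ 1 + ε := by
    intro j
    have hle : algebraMap ℝ ((W j) →L[ℂ] (W j)) (1 / (1 + ε)) ≤ S j := by
      refine aux_loewner_le (S j) _ (hSA j) fun x => ?_
      have key : RCLike.re (inner ℂ ((S j x : W j) : H) ((x : W j) : H) : ℂ)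
          = ∑ i ∈ I j, ‖(inner ℂ (φ i) ((x : W j) : H) : ℂ)‖ ^ 2 := by
        rw [inner_re_symm]; exact hre j x
      show (1 / (1 + ε)) * ‖x‖ ^ 2 ≤ RCLike.re (inner ℂ (S j x) x : ℂ)
      have hxx : RCLike.re (inner ℂ (S j x) x : ℂ)
          = ∑ i ∈ I j, ‖(inner ℂ (φ i) ((x : W j) : H) : ℂ)‖ ^ 2 := key
      rw [hxx]
      have h5 := hQlow j x
      have hnx : ‖x‖ = ‖((x : W j) : H)‖ := rfl
      rw [hnx, div_mul_eq_mul_div, one_mul, div_le_iff₀ hε1']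
      linarith [h5]
    have hge : S j ≤ algebraMap ℝ ((W j) →L[ℂ] (W j)) (1 + ε) := by
      refine aux_loewner_ge (S j) _ (hSA j) fun x => ?_
      have key : RCLike.re (inner ℂ ((S j x : W j) : H) ((x : W j) : H) : ℂ)
          = ∑ i ∈ I j, ‖(inner ℂ (φ i) ((x : W j) : H) : ℂ)‖ ^ 2 := by
        rw [inner_re_symm]; exact hre j x
      show RCLike.re (inner ℂ (S j x) x : ℂ) ≤ (1 + ε) * ‖x‖ ^ 2
      have hxx : RCLike.re (inner ℂ (S j x) x : ℂ)
          = ∑ i ∈ I j, ‖(inner ℂ (φ i) ((x : W j) : H) : ℂ)‖ ^ 2 := key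
      rw [hxx]
      have hnx : ‖x‖ = ‖((x : W j) : H)‖ := rfl
      rw [hnx]
      exact hQup j x
    exact fun t ht => ⟨(algebraMap_le_iff_le_spectrum (hSA j)).mp hle t ht,
      (le_algebraMap_iff_spectrum_le (hSA j)).mp hge t ht⟩
  -- operator norm bound
  have hop : ∀ j, ‖cfc (fun t : ℝ => (Real.sqrt t)⁻¹) (S j) - 1‖ ≤ ε :=
    fun j => aux_opnorm (S j) (hSA j) ε hε0 hε1 (hspec j)
  -- upper norm bound from RIP
  have hnormup : ∀ (E : Finset (Fin M)), E.card ≤ s → ∀ c : Fin M → ℂ,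
      ‖∑ i ∈ E, c i • φ i‖ ≤ Real.sqrt (1 + ε) * Real.sqrt (∑ i ∈ E, ‖c i‖ ^ 2) := by
    intro E hE c
    have h := (hRIP E hE c).2
    have h1 : ‖∑ i ∈ E, c i • φ i‖ ≤ Real.sqrt ((1 + ε) * ∑ i ∈ E, ‖c i‖ ^ 2) := by
      rw [show ‖∑ i ∈ E, c i • φ i‖ = Real.sqrt (‖∑ i ∈ E, c i • φ i‖ ^ 2) from
        (Real.sqrt_sq (norm_nonneg _)).symm]
      exact Real.sqrt_le_sqrt h
    rwa [Real.sqrt_mul (by linarith)] at h1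
  -- fiberwise decomposition
  choose cl hcl using hcover
  have hfibset : ∀ j, J ∩ I j = J.filter (fun i => cl i = j) := by
    intro j
    ext i
    simp only [Finset.mem_inter, Finset.mem_filter]
    refine and_congr_right fun hiJ => ⟨fun h => ?_, fun h => h ▸ hcl i⟩
    by_contra hne
    exact Finset.disjoint_left.mp (hdisj (cl i) j hne) (hcl i) h
  have hfibH : ∀ g : Fin M → H, ∑ j : Fin K, ∑ i ∈ J ∩ I j, g i = ∑ i ∈ J, g i := by
    intro g
    calc ∑ j : Fin K, ∑ i ∈ J ∩ I j, g i
        = ∑ j : Fin K, ∑ i ∈ J.filter (fun i => cl i = j), g i := by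
          refine Finset.sum_congr rfl fun j _ => by rw [hfibset j]
      _ = ∑ i ∈ J, g i := Finset.sum_fiberwise J cl g
  have hfibR : ∑ j : Fin K, ∑ i ∈ J ∩ I j, ‖a i‖ ^ 2 = ∑ i ∈ J, ‖a i‖ ^ 2 := by
    calc ∑ j : Fin K, ∑ i ∈ J ∩ I j, ‖a i‖ ^ 2
        = ∑ j : Fin K, ∑ i ∈ J.filter (fun i => cl i = j), ‖a i‖ ^ 2 := by
          refine Finset.sum_congr rfl fun j _ => by rw [hfibset j]
      _ = ∑ i ∈ J, ‖a i‖ ^ 2 := Finset.sum_fiberwise J cl _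
  -- block vectors
  let x_ : (j : Fin K) → W j := fun j =>
    ∑ i ∈ (J ∩ I j).attach, a i • (⟨φ i, hmem j i (Finset.mem_inter.mp i.2).2⟩ : W j)
  have hxco : ∀ j, ((x_ j : W j) : H) = ∑ i ∈ J ∩ I j, a i • φ i := by
    intro j
    show ((∑ i ∈ (J ∩ I j).attach, a i • (⟨φ i, _⟩ : W j) : W j) : H) = _
    rw [Submodule.coe_sum]
    rw [← Finset.sum_attach (J ∩ I j) (fun i => a i • φ i)]
    rfl
  have hxnorm : ∀ j, ‖x_ j‖ ≤ Real.sqrt (1 + ε) * Real.sqrt (∑ i ∈ J ∩ I j, ‖a i‖ ^ 2) := by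
    intro j
    have h1 : ‖x_ j‖ = ‖((x_ j : W j) : H)‖ := rfl
    rw [h1, hxco j]
    exact hnormup (J ∩ I j)
      (le_trans (Finset.card_le_card Finset.inter_subset_left) hJ) a
  -- block identity
  have hblock : ∀ j : Fin K, (j : ℕ) < K₁ →
      ∑ i ∈ J ∩ I j, a i • (ψ i - φ i)
        = (((cfc (fun t : ℝ => (Real.sqrt t)⁻¹) (S j) - 1) (x_ j) : W j) : H) := by
    intro j hj
    have h2 : cfc (fun t : ℝ => (Real.sqrt t)⁻¹) (S j) (x_ j) = ∑ i ∈ (J ∩ I j).attach,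
        a i • cfc (fun t : ℝ => (Real.sqrt t)⁻¹) (S j)
          (⟨φ i, hmem j i (Finset.mem_inter.mp i.2).2⟩ : W j) := by
      rw [map_sum]
      exact Finset.sum_congr rfl fun i _ => by rw [map_smul]
    have h3 : (cfc (fun t : ℝ => (Real.sqrt t)⁻¹) (S j) - 1) (x_ j)
        = cfc (fun t : ℝ => (Real.sqrt t)⁻¹) (S j) (x_ j) - x_ j := by
      simp [ContinuousLinearMap.sub_apply]
    rw [h3, Submodule.coe_sub, h2, Submodule.coe_sum, hxco j]
    rw [← Finset.sum_attach (J ∩ I j) (fun i => a i • (ψ i - φ i)),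
      ← Finset.sum_attach (J ∩ I j) (fun i => a i • φ i), ← Finset.sum_sub_distrib]
    refine Finset.sum_congr rfl fun i _ => ?_
    rw [Submodule.coe_smul]
    rw [hψ j i (Finset.mem_inter.mp i.2).2, if_pos hj]
    rw [smul_sub]
  -- blocks beyond K₁ vanish
  have hzero : ∀ j : Fin K, ¬ ((j : ℕ) < K₁) →
      ∑ i ∈ J ∩ I j, a i • (ψ i - φ i) = 0 := by
    intro j hj
    refine Finset.sum_eq_zero fun i hi => ?_
    rw [hψ j i (Finset.mem_inter.mp hi).2, if_neg hj]
    simp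
  -- the split
  set T : Finset (Fin K) := Finset.univ.filter (fun j : Fin K => (j : ℕ) < K₁) with hT
  have hsplit : ∑ i ∈ J, a i • ψ i = (∑ i ∈ J, a i • φ i)
      + ∑ j ∈ T, (((cfc (fun t : ℝ => (Real.sqrt t)⁻¹) (S j) - 1) (x_ j) : W j) : H) := by
    have e1 : ∑ j ∈ T, (((cfc (fun t : ℝ => (Real.sqrt t)⁻¹) (S j) - 1) (x_ j) : W j) : H)
        = ∑ j : Fin K, ∑ i ∈ J ∩ I j, a i • (ψ i - φ i) := by
      rw [← Finset.sum_subset (Finset.subset_univ T)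
        (fun j _ hj => hzero j (by simpa [hT] using hj))]
      exact (Finset.sum_congr rfl fun j hj =>
        (hblock j (by simpa [hT] using hj)).symm)
    rw [e1, hfibH (fun i => a i • (ψ i - φ i))]
    simp [smul_sub, Finset.sum_sub_distrib]
  -- numbers
  set X : ℝ := Real.sqrt (∑ i ∈ J, ‖a i‖ ^ 2) with hX
  have hX0 : 0 ≤ X := Real.sqrt_nonneg _
  have hTcard : (T.card : ℝ) ≤ (K₁ : ℝ) := by
    have h1 : T.card = (T.image (Fin.val)).card :=
      (Finset.card_image_of_injective T Fin.val_injective).symm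
    have h2 : T.image (Fin.val) ⊆ Finset.range K₁ := by
      intro n hn
      obtain ⟨j, hj, rfl⟩ := Finset.mem_image.mp hn
      exact Finset.mem_range.mpr (by simpa [hT] using hj)
    have := (h1 ▸ Finset.card_le_card h2)
    exact Nat.cast_le.mpr (h1.le.trans ((Finset.card_le_card h2).trans (Finset.card_range K₁).le))
  -- sum over blocks
  have hsum1 : ∑ j ∈ T, Real.sqrt (∑ i ∈ J ∩ I j, ‖a i‖ ^ 2) ≤ Real.sqrt K₁ * X := by
    have hcs : (∑ j ∈ T, Real.sqrt (∑ i ∈ J ∩ I j, ‖a i‖ ^ 2)) ^ 2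
        ≤ (T.card : ℝ) * ∑ j ∈ T, (∑ i ∈ J ∩ I j, ‖a i‖ ^ 2) := by
      have h := sq_sum_le_card_mul_sum_sq (s := T)
        (f := fun j => Real.sqrt (∑ i ∈ J ∩ I j, ‖a i‖ ^ 2))
      have heq : ∑ j ∈ T, Real.sqrt (∑ i ∈ J ∩ I j, ‖a i‖ ^ 2) ^ 2
          = ∑ j ∈ T, (∑ i ∈ J ∩ I j, ‖a i‖ ^ 2) :=
        Finset.sum_congr rfl fun j _ =>
          Real.sq_sqrt (Finset.sum_nonneg fun i _ => by positivity)
      rw [heq] at h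
      exact h
    have hTsum : ∑ j ∈ T, (∑ i ∈ J ∩ I j, ‖a i‖ ^ 2) ≤ ∑ i ∈ J, ‖a i‖ ^ 2 := by
      rw [← hfibR]
      refine Finset.sum_le_sum_of_subset_of_nonneg (Finset.subset_univ T) ?_
      exact fun j _ _ => Finset.sum_nonneg fun i _ => by positivity
    have h0 : 0 ≤ ∑ j ∈ T, Real.sqrt (∑ i ∈ J ∩ I j, ‖a i‖ ^ 2) :=
      Finset.sum_nonneg fun j _ => Real.sqrt_nonneg _
    calc ∑ j ∈ T, Real.sqrt (∑ i ∈ J ∩ I j, ‖a i‖ ^ 2)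
        = Real.sqrt ((∑ j ∈ T, Real.sqrt (∑ i ∈ J ∩ I j, ‖a i‖ ^ 2)) ^ 2) :=
          (Real.sqrt_sq h0).symm
      _ ≤ Real.sqrt ((K₁ : ℝ) * ∑ i ∈ J, ‖a i‖ ^ 2) := by
          apply Real.sqrt_le_sqrt
          calc (∑ j ∈ T, Real.sqrt (∑ i ∈ J ∩ I j, ‖a i‖ ^ 2)) ^ 2
              ≤ (T.card : ℝ) * ∑ j ∈ T, (∑ i ∈ J ∩ I j, ‖a i‖ ^ 2) := hcs
            _ ≤ (K₁ : ℝ) * ∑ i ∈ J, ‖a i‖ ^ 2 := by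
                apply mul_le_mul hTcard hTsum
                  (Finset.sum_nonneg fun j _ => Finset.sum_nonneg fun i _ => by positivity)
                  (Nat.cast_nonneg _)
      _ = Real.sqrt K₁ * X := Real.sqrt_mul (Nat.cast_nonneg _) _
  -- the norm chain
  have hchain : ‖∑ i ∈ J, a i • ψ i‖ ≤
      Real.sqrt (1 + ε) * X + ε * (Real.sqrt (1 + ε) * (Real.sqrt K₁ * X)) := by
    rw [hsplit]
    refine le_trans (norm_add_le _ _) ?_
    have hA : ‖∑ i ∈ J, a i • φ i‖ ≤ Real.sqrt (1 + ε) * X := hnormup J hJ a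
    have hB : ‖∑ j ∈ T, (((cfc (fun t : ℝ => (Real.sqrt t)⁻¹) (S j) - 1) (x_ j) : W j) : H)‖
        ≤ ε * (Real.sqrt (1 + ε) * (Real.sqrt K₁ * X)) := by
      refine le_trans (norm_sum_le _ _) ?_
      have hterm : ∀ j ∈ T,
          ‖(((cfc (fun t : ℝ => (Real.sqrt t)⁻¹) (S j) - 1) (x_ j) : W j) : H)‖
            ≤ ε * (Real.sqrt (1 + ε) * Real.sqrt (∑ i ∈ J ∩ I j, ‖a i‖ ^ 2)) := by
        intro j hj
        have h1 : ‖(((cfc (fun t : ℝ => (Real.sqrt t)⁻¹) (S j) - 1) (x_ j) : W j) : H)‖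
            = ‖(cfc (fun t : ℝ => (Real.sqrt t)⁻¹) (S j) - 1) (x_ j)‖ := rfl
        rw [h1]
        calc ‖(cfc (fun t : ℝ => (Real.sqrt t)⁻¹) (S j) - 1) (x_ j)‖
            ≤ ‖cfc (fun t : ℝ => (Real.sqrt t)⁻¹) (S j) - 1‖ * ‖x_ j‖ :=
              ContinuousLinearMap.le_opNorm _ _
          _ ≤ ε * (Real.sqrt (1 + ε) * Real.sqrt (∑ i ∈ J ∩ I j, ‖a i‖ ^ 2)) := by
              apply mul_le_mul (hop j) (hxnorm j) (norm_nonneg _) hε0.le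
      refine le_trans (Finset.sum_le_sum hterm) ?_
      rw [← Finset.mul_sum, ← Finset.mul_sum]
      have := mul_le_mul_of_nonneg_left hsum1 (Real.sqrt_nonneg (1 + ε))
      exact mul_le_mul_of_nonneg_left this hε0.le
    exact add_le_add hA hB
  -- final numeric comparison
  have hs1 : Real.sqrt (1 + ε) ≤ 1 + ε := by
    have hsq : Real.sqrt (1 + ε) ^ 2 = 1 + ε := Real.sq_sqrt hε1'.le
    have hone : (1:ℝ) ≤ Real.sqrt (1 + ε) := Real.one_le_sqrt.mpr (by linarith)
    nlinarith
  have hA : Real.sqrt (1 + ε) ≤ (1 + ε) ^ ((3 : ℝ) / 2) := by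
    calc Real.sqrt (1 + ε) ≤ 1 + ε := hs1
      _ = (1 + ε) ^ ((1 : ℝ)) := (Real.rpow_one _).symm
      _ ≤ (1 + ε) ^ ((3 : ℝ) / 2) :=
          Real.rpow_le_rpow_of_exponent_le (by linarith) (by norm_num)
  have hB : ε * Real.sqrt (1 + ε) ≤ 4 * ε * (1 + ε) := by
    nlinarith [Real.sqrt_nonneg (1 + ε)]
  refine le_trans hchain ?_
  have h1 : Real.sqrt (1 + ε) * X ≤ (1 + ε) ^ ((3 : ℝ) / 2) * X :=
    mul_le_mul_of_nonneg_right hA hX0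
  have h2 : ε * (Real.sqrt (1 + ε) * (Real.sqrt K₁ * X))
      ≤ 4 * ε * (1 + ε) * Real.sqrt K₁ * X := by
    have hK0 : 0 ≤ Real.sqrt (K₁ : ℝ) := Real.sqrt_nonneg _
    nlinarith [mul_le_mul_of_nonneg_right hB (mul_nonneg hK0 hX0)]
  calc Real.sqrt (1 + ε) * X + ε * (Real.sqrt (1 + ε) * (Real.sqrt K₁ * X))
      ≤ (1 + ε) ^ ((3 : ℝ) / 2) * X + 4 * ε * (1 + ε) * Real.sqrt K₁ * X :=
        add_le_add h1 h2
    _ = ((1 + ε) ^ ((3 : ℝ) / 2) + 4 * ε * (1 + ε) * Real.sqrt K₁) * X := by ring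
end

section
/- For each i in an index set I, let v_i > 0, let W_i be a closed subspace of a complex Hilbert space H, and let {φ_ij}_{j∈J_i} be a frame for W_i with frame bounds A_i, B_i. Assume 0 < A = inf_i A_i and B = sup_i B_i < ∞. If {(W_i, v_i)}_{i∈I} is a fusion frame for H with fusion frame bounds C, D, then {v_i φ_ij}_{i∈I, j∈J_i} is a frame for H with frame bounds AC, BD. -/
open scoped BigOperators

set_option maxHeartbeats 1000000

/-- If {φ_ij}_j is a frame for W_i with bounds A_i, B_i, where
0 < A ≤ A_i and B_i ≤ B for all i, and {(W_i, v_i)} is a fusion frame with bounds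
C, D, then {v_i φ_ij} is a frame for H with bounds AC, BD. -/
theorem fusion_frame_to_frame {H : Type*} [NormedAddCommGroup H]
    [InnerProductSpace ℂ H] [CompleteSpace H]
    {ι : Type*} (v : ι → ℝ) (hv : ∀ i, 0 < v i)
    (W : ι → Submodule ℂ H) [∀ i, CompleteSpace (W i)]
    {J : ι → Type*} (φ : ∀ i, J i → H) (hmem : ∀ i j, φ i j ∈ W i)
    (A B : ℝ) (Ai Bi : ι → ℝ) (hA : 0 < A)
    (hAle : ∀ i, A ≤ Ai i) (hBle : ∀ i, Bi i ≤ B)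
    (hframe : ∀ i, ∀ x ∈ W i,
      Ai i * ‖x‖ ^ 2 ≤ ∑' j, ‖(inner ℂ (φ i j) x : ℂ)‖ ^ 2 ∧
      ∑' j, ‖(inner ℂ (φ i j) x : ℂ)‖ ^ 2 ≤ Bi i * ‖x‖ ^ 2)
    (C D : ℝ) (hC : 0 < C) (hCD : C ≤ D)
    (hfusion : ∀ x : H,
      C * ‖x‖ ^ 2 ≤ ∑' i, v i ^ 2 * ‖((W i).orthogonalProjection x : H)‖ ^ 2 ∧
      ∑' i, v i ^ 2 * ‖((W i).orthogonalProjection x : H)‖ ^ 2 ≤ D * ‖x‖ ^ 2) :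
    ∀ x : H,
      A * C * ‖x‖ ^ 2 ≤ ∑' p : Σ i, J i, ‖(inner ℂ ((v p.1 : ℂ) • φ p.1 p.2) x : ℂ)‖ ^ 2 ∧
      ∑' p : Σ i, J i, ‖(inner ℂ ((v p.1 : ℂ) • φ p.1 p.2) x : ℂ)‖ ^ 2 ≤ B * D * ‖x‖ ^ 2 := by
  intro x
  rcases eq_or_ne x 0 with hx | hx
  · constructor <;> simp [hx]
  set P : ∀ i, H := fun i => ((W i).orthogonalProjection x : H) with hP
  -- inner through projection
  have hkey : ∀ i j, (inner ℂ (φ i j) x : ℂ) = inner ℂ (φ i j) (P i) := by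
    intro i j
    have hxo : x - P i ∈ (W i)ᗮ := Submodule.sub_starProjection_mem_orthogonal (K := W i) x
    have h0 : (inner ℂ (φ i j) (x - P i) : ℂ) = 0 :=
      (Submodule.mem_orthogonal (W i) _).1 hxo _ (hmem i j)
    rw [inner_sub_right] at h0
    exact sub_eq_zero.1 h0
  -- rewrite the summand
  have hterm : ∀ p : Σ i, J i,
      ‖(inner ℂ ((v p.1 : ℂ) • φ p.1 p.2) x : ℂ)‖ ^ 2
        = v p.1 ^ 2 * ‖(inner ℂ (φ p.1 p.2) (P p.1) : ℂ)‖ ^ 2 := by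
    rintro ⟨i, j⟩
    rw [inner_smul_left, hkey]
    simp [norm_mul, mul_pow, Complex.norm_real, sq_abs]
  -- per-fiber summability
  have hfib : ∀ i, Summable fun j => ‖(inner ℂ (φ i j) (P i) : ℂ)‖ ^ 2 := by
    intro i
    by_cases h0 : P i = 0
    · simp only [h0, inner_zero_right, norm_zero]
      simpa using summable_zero
    · by_contra hns
      have := (hframe i (P i) ((W i).orthogonalProjection x).2).1
      rw [tsum_eq_zero_of_not_summable hns] at this
      have hnorm : 0 < ‖P i‖ := norm_pos_iff.2 h0
      nlinarith [lt_of_lt_of_le hA (hAle i), pow_pos hnorm 2]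
  -- summability of i ↦ v i ^ 2 * ‖P i‖ ^ 2
  have hg : Summable fun i => v i ^ 2 * ‖P i‖ ^ 2 := by
    by_contra hns
    have := (hfusion x).1
    rw [tsum_eq_zero_of_not_summable hns] at this
    have hnorm : 0 < ‖x‖ := norm_pos_iff.2 hx
    nlinarith [pow_pos hnorm 2]
  -- fiber tsum bounds
  have hup : ∀ i, v i ^ 2 * ∑' j, ‖(inner ℂ (φ i j) (P i) : ℂ)‖ ^ 2
      ≤ B * (v i ^ 2 * ‖P i‖ ^ 2) := by
    intro i
    have h1 := (hframe i (P i) ((W i).orthogonalProjection x).2).2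
    have h2 : Bi i * ‖P i‖ ^ 2 ≤ B * ‖P i‖ ^ 2 :=
      mul_le_mul_of_nonneg_right (hBle i) (sq_nonneg _)
    have hv2 : (0:ℝ) ≤ v i ^ 2 := sq_nonneg _
    nlinarith [mul_le_mul_of_nonneg_left (le_trans h1 h2) hv2]
  have hlo : ∀ i, A * (v i ^ 2 * ‖P i‖ ^ 2)
      ≤ v i ^ 2 * ∑' j, ‖(inner ℂ (φ i j) (P i) : ℂ)‖ ^ 2 := by
    intro i
    have h1 := (hframe i (P i) ((W i).orthogonalProjection x).2).1
    have h2 : A * ‖P i‖ ^ 2 ≤ Ai i * ‖P i‖ ^ 2 :=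
      mul_le_mul_of_nonneg_right (hAle i) (sq_nonneg _)
    have hv2 : (0:ℝ) ≤ v i ^ 2 := sq_nonneg _
    nlinarith [mul_le_mul_of_nonneg_left (le_trans h2 h1) hv2]
  -- B is positive
  have hBpos : 0 < B := by
    have hpos : 0 < ∑' i, v i ^ 2 * ‖P i‖ ^ 2 :=
      lt_of_lt_of_le (mul_pos hC (pow_pos (norm_pos_iff.2 hx) 2)) (hfusion x).1
    have hex : ∃ i, v i ^ 2 * ‖P i‖ ^ 2 ≠ 0 := by
      by_contra h
      push_neg at h
      rw [tsum_congr h, tsum_zero] at hpos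
      exact lt_irrefl 0 hpos
    obtain ⟨i, hi⟩ := hex
    have hPn : 0 < ‖P i‖ ^ 2 := by
      rcases lt_or_eq_of_le (sq_nonneg ‖P i‖) with h | h
      · exact h
      · exact absurd (by rw [← h]; ring) hi
    have h1 := (hframe i (P i) ((W i).orthogonalProjection x).2).1
    have h2 := (hframe i (P i) ((W i).orthogonalProjection x).2).2
    nlinarith [hAle i, hBle i]
  -- summability over sigma
  have hfnn : ∀ p : Σ i, J i, 0 ≤ v p.1 ^ 2 * ‖(inner ℂ (φ p.1 p.2) (P p.1) : ℂ)‖ ^ 2 :=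
    fun p => mul_nonneg (sq_nonneg _) (sq_nonneg _)
  have hfibf : ∀ i, Summable fun j => v i ^ 2 * ‖(inner ℂ (φ i j) (P i) : ℂ)‖ ^ 2 :=
    fun i => (hfib i).mul_left _
  have hfibsum : ∀ i, (∑' j, v i ^ 2 * ‖(inner ℂ (φ i j) (P i) : ℂ)‖ ^ 2)
      = v i ^ 2 * ∑' j, ‖(inner ℂ (φ i j) (P i) : ℂ)‖ ^ 2 :=
    fun i => tsum_mul_left
  have hsumf : Summable (fun p : Σ i, J i =>
      v p.1 ^ 2 * ‖(inner ℂ (φ p.1 p.2) (P p.1) : ℂ)‖ ^ 2) := by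
    rw [summable_sigma_of_nonneg hfnn]
    refine ⟨hfibf, ?_⟩
    exact Summable.of_nonneg_of_le (fun i => tsum_nonneg fun j => hfnn ⟨i, j⟩)
      (fun i => by rw [hfibsum i]; exact hup i) (hg.mul_left B)
  have hsums : Summable fun i => ∑' j, v i ^ 2 * ‖(inner ℂ (φ i j) (P i) : ℂ)‖ ^ 2 :=
    ((summable_sigma_of_nonneg hfnn).1 hsumf).2
  have htsig : (∑' p : Σ i, J i, v p.1 ^ 2 * ‖(inner ℂ (φ p.1 p.2) (P p.1) : ℂ)‖ ^ 2)
      = ∑' i, ∑' j, v i ^ 2 * ‖(inner ℂ (φ i j) (P i) : ℂ)‖ ^ 2 := Summable.tsum_sigma hsumf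
  have hrw : (∑' p : Σ i, J i, ‖(inner ℂ ((v p.1 : ℂ) • φ p.1 p.2) x : ℂ)‖ ^ 2)
      = ∑' p : Σ i, J i, v p.1 ^ 2 * ‖(inner ℂ (φ p.1 p.2) (P p.1) : ℂ)‖ ^ 2 :=
    tsum_congr hterm
  rw [hrw, htsig]
  constructor
  · calc A * C * ‖x‖ ^ 2 ≤ A * ∑' i, v i ^ 2 * ‖P i‖ ^ 2 := by
          have := (hfusion x).1
          nlinarith
      _ = ∑' i, A * (v i ^ 2 * ‖P i‖ ^ 2) := tsum_mul_left.symm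
      _ ≤ ∑' i, ∑' j, v i ^ 2 * ‖(inner ℂ (φ i j) (P i) : ℂ)‖ ^ 2 := by
          refine Summable.tsum_le_tsum (fun i => ?_) (hg.mul_left A) hsums
          rw [hfibsum i]; exact hlo i
  · calc (∑' i, ∑' j, v i ^ 2 * ‖(inner ℂ (φ i j) (P i) : ℂ)‖ ^ 2)
        ≤ ∑' i, B * (v i ^ 2 * ‖P i‖ ^ 2) := by
          refine Summable.tsum_le_tsum (fun i => ?_) hsums (hg.mul_left B)
          rw [hfibsum i]; exact hup i
      _ = B * ∑' i, v i ^ 2 * ‖P i‖ ^ 2 := tsum_mul_left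
      _ ≤ B * D * ‖x‖ ^ 2 := by
          have := (hfusion x).2
          nlinarith
end

section
/- For each i in an index set I, let v_i > 0, let W_i be a closed subspace of a complex Hilbert space H, and let {φ_ij}_{j∈J_i} be a frame for W_i with frame bounds A_i, B_i. Assume 0 < A = inf_i A_i and B = sup_i B_i < ∞. If {v_i φ_ij}_{i∈I, j∈J_i} is a frame for H with frame bounds C, D, then {(W_i, v_i)}_{i∈I} is a fusion frame for H with fusion frame bounds C/B, D/A. -/
open scoped BigOperators

/-- If {φ_ij}_j is a frame for W_i with bounds A_i, B_i, where
0 < A ≤ A_i and B_i ≤ B for all i, and {v_i φ_ij} is a frame for H with bounds C, D,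
then {(W_i, v_i)} is a fusion frame with bounds C/B, D/A. -/
theorem frame_to_fusion_frame {H : Type*} [NormedAddCommGroup H]
    [InnerProductSpace ℂ H] [CompleteSpace H]
    {ι : Type*} (v : ι → ℝ) (hv : ∀ i, 0 < v i)
    (W : ι → Submodule ℂ H) [∀ i, CompleteSpace (W i)]
    {J : ι → Type*} (φ : ∀ i, J i → H) (hmem : ∀ i j, φ i j ∈ W i)
    (A B : ℝ) (Ai Bi : ι → ℝ) (hA : 0 < A)
    (hAle : ∀ i, A ≤ Ai i) (hBle : ∀ i, Bi i ≤ B)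
    (hframe : ∀ i, ∀ x ∈ W i,
      Ai i * ‖x‖ ^ 2 ≤ ∑' j, ‖(inner ℂ (φ i j) x : ℂ)‖ ^ 2 ∧
      ∑' j, ‖(inner ℂ (φ i j) x : ℂ)‖ ^ 2 ≤ Bi i * ‖x‖ ^ 2)
    (C D : ℝ) (hC : 0 < C) (hCD : C ≤ D)
    (hframeH : ∀ x : H,
      C * ‖x‖ ^ 2 ≤ ∑' p : Σ i, J i, ‖(inner ℂ ((v p.1 : ℂ) • φ p.1 p.2) x : ℂ)‖ ^ 2 ∧
      ∑' p : Σ i, J i, ‖(inner ℂ ((v p.1 : ℂ) • φ p.1 p.2) x : ℂ)‖ ^ 2 ≤ D * ‖x‖ ^ 2) :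
    ∀ x : H,
      C / B * ‖x‖ ^ 2 ≤ ∑' i, v i ^ 2 * ‖(Submodule.orthogonalProjection (W i) x : H)‖ ^ 2 ∧
      ∑' i, v i ^ 2 * ‖(Submodule.orthogonalProjection (W i) x : H)‖ ^ 2 ≤ D / A * ‖x‖ ^ 2 := by
  intro x
  set g : (Σ i, J i) → ℝ := fun p => ‖(inner ℂ ((v p.1 : ℂ) • φ p.1 p.2) x : ℂ)‖ ^ 2 with hg
  set f : ι → ℝ := fun i => v i ^ 2 * ‖(Submodule.orthogonalProjection (W i) x : H)‖ ^ 2 with hf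
  -- inner products see only the projection
  have hinner : ∀ i j, (inner ℂ (φ i j) x : ℂ)
      = inner ℂ (φ i j) ((Submodule.orthogonalProjection (W i) x : H)) := by
    intro i j
    have horth : (inner ℂ (φ i j) (x - (Submodule.orthogonalProjection (W i) x : H)) : ℂ) = 0 :=
      (Submodule.mem_orthogonal _ _).1 (Submodule.sub_starProjection_mem_orthogonal (K := W i) x) _ (hmem i j)
    rw [inner_sub_right] at horth
    linear_combination horth
  have hgval : ∀ p : Σ i, J i, g p
      = v p.1 ^ 2 * ‖(inner ℂ (φ p.1 p.2) ((Submodule.orthogonalProjection (W p.1) x : H)) : ℂ)‖ ^ 2 := by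
    intro p
    rw [hg]
    simp only [inner_smul_left, Complex.conj_ofReal, norm_mul, Complex.norm_real,
      Real.norm_eq_abs, abs_of_pos (hv p.1), mul_pow, hinner]
  by_cases hsum : Summable g
  · -- main case
    have hsig : ∑' p, g p = ∑' i, ∑' j, g ⟨i, j⟩ :=
      hsum.tsum_sigma' (fun i => hsum.sigma_factor i)
    have hS : ∀ i, ∑' j, g ⟨i, j⟩
        = v i ^ 2 * ∑' j, ‖(inner ℂ (φ i j) ((Submodule.orthogonalProjection (W i) x : H)) : ℂ)‖ ^ 2 := by
      intro i
      rw [← tsum_mul_left]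
      exact tsum_congr fun j => hgval ⟨i, j⟩
    have hbd : ∀ i, A * f i ≤ ∑' j, g ⟨i, j⟩ ∧ ∑' j, g ⟨i, j⟩ ≤ B * f i := by
      intro i
      have hfr := hframe i _ (Submodule.orthogonalProjection (W i) x).2
      have hv2 : (0:ℝ) ≤ v i ^ 2 := sq_nonneg _
      constructor
      · have h1 : A * ‖(Submodule.orthogonalProjection (W i) x : H)‖ ^ 2
            ≤ ∑' j, ‖(inner ℂ (φ i j) ((Submodule.orthogonalProjection (W i) x : H)) : ℂ)‖ ^ 2 :=
          le_trans (by nlinarith [hAle i, sq_nonneg ‖(Submodule.orthogonalProjection (W i) x : H)‖]) hfr.1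
        rw [hS i]
        calc A * f i = v i ^ 2 * (A * ‖(Submodule.orthogonalProjection (W i) x : H)‖ ^ 2) := by
              simp only [hf]; ring
          _ ≤ _ := mul_le_mul_of_nonneg_left h1 hv2
      · have h1 : ∑' j, ‖(inner ℂ (φ i j) ((Submodule.orthogonalProjection (W i) x : H)) : ℂ)‖ ^ 2
            ≤ B * ‖(Submodule.orthogonalProjection (W i) x : H)‖ ^ 2 :=
          le_trans hfr.2 (by nlinarith [hBle i, sq_nonneg ‖(Submodule.orthogonalProjection (W i) x : H)‖])
        rw [hS i]
        calc v i ^ 2 * ∑' j, ‖(inner ℂ (φ i j) ((Submodule.orthogonalProjection (W i) x : H)) : ℂ)‖ ^ 2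
              ≤ v i ^ 2 * (B * ‖(Submodule.orthogonalProjection (W i) x : H)‖ ^ 2) :=
            mul_le_mul_of_nonneg_left h1 hv2
          _ = B * f i := by simp only [hf]; ring
    have hh : Summable fun i => ∑' j, g ⟨i, j⟩ := hsum.sigma
    have hfsumm : Summable f :=
      Summable.of_nonneg_of_le (fun i => by positivity)
        (fun i => (le_div_iff₀' hA).2 (hbd i).1) (hh.div_const A)
    have hglb := (hframeH x).1
    have hgub := (hframeH x).2
    have hglb' : C * ‖x‖ ^ 2 ≤ ∑' i, ∑' j, g ⟨i, j⟩ := by rw [← hsig]; exact hglb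
    have hgub' : ∑' i, ∑' j, g ⟨i, j⟩ ≤ D * ‖x‖ ^ 2 := by rw [← hsig]; exact hgub
    have hle1 : ∑' i, ∑' j, g ⟨i, j⟩ ≤ B * ∑' i, f i := by
      rw [← tsum_mul_left]
      exact Summable.tsum_le_tsum (fun i => (hbd i).2) hh (hfsumm.mul_left B)
    have hle2 : A * ∑' i, f i ≤ ∑' i, ∑' j, g ⟨i, j⟩ := by
      rw [← tsum_mul_left]
      exact Summable.tsum_le_tsum (fun i => (hbd i).1) (hfsumm.mul_left A) hh
    have hfnn : (0:ℝ) ≤ ∑' i, f i := tsum_nonneg fun i => by positivity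
    constructor
    · by_cases hB : 0 < B
      · rw [div_mul_eq_mul_div, div_le_iff₀ hB]
        calc C * ‖x‖ ^ 2 ≤ B * ∑' i, f i := le_trans hglb' hle1
          _ = (∑' i, f i) * B := by ring
      · push_neg at hB
        have hx0 : ‖x‖ ^ 2 ≤ 0 := by
          by_contra h
          push_neg at h
          nlinarith [le_trans hglb' hle1, mul_pos hC h, mul_nonneg (neg_nonneg.2 hB) hfnn]
        have hx2 : ‖x‖ ^ 2 = 0 := le_antisymm hx0 (sq_nonneg _)
        obtain rfl : x = 0 := norm_eq_zero.1 ((pow_eq_zero_iff two_ne_zero).1 hx2)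
        simp [hf]
    · rw [div_mul_eq_mul_div, le_div_iff₀ hA]
      calc (∑' i, f i) * A = A * ∑' i, f i := by ring
        _ ≤ D * ‖x‖ ^ 2 := le_trans hle2 hgub'
  · -- degenerate case: the sum is 0, so x = 0
    have h0 : ∑' p, g p = 0 := tsum_eq_zero_of_not_summable hsum
    have hglb := (hframeH x).1
    rw [show (∑' p : Σ i, J i, ‖(inner ℂ ((v p.1 : ℂ) • φ p.1 p.2) x : ℂ)‖ ^ 2) = ∑' p, g p from rfl,
      h0] at hglb
    have hx0 : ‖x‖ ^ 2 ≤ 0 := by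
      by_contra h
      push_neg at h
      nlinarith [mul_pos hC h]
    have hx2 : ‖x‖ ^ 2 = 0 := le_antisymm hx0 (sq_nonneg _)
    obtain rfl : x = 0 := norm_eq_zero.1 ((pow_eq_zero_iff two_ne_zero).1 hx2)
    simp [hf]
end

section
/- For each i in an index set I, let v_i > 0 and let W_i be a closed subspace of a complex Hilbert space H. Then {(W_i, v_i)}_{i∈I} is a fusion frame for H with fusion frame bounds A, B if and only if for every choice of orthonormal bases {e_ij}_{j∈K_i} for the subspaces W_i, the family {v_i e_ij}_{i∈I, j∈K_i} is a frame for H with frame bounds A, B. -/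
open scoped BigOperators

universe u

lemma auxA {E : Type*} [NormedAddCommGroup E] [InnerProductSpace ℂ E]
    {κ : Type*} (b : HilbertBasis κ ℂ E) (y : E) :
    HasSum (fun j => ‖(inner ℂ (b j) y : ℂ)‖ ^ 2) (‖y‖ ^ 2) := by
  have h := (b.hasSum_inner_mul_inner y y).mapL Complex.reCLM
  convert h using 2 with j
  · rw [← inner_conj_symm y (b j), Complex.conj_mul']
    simp [← Complex.ofReal_pow]
  · simp [Complex.reCLM_apply, ← @inner_self_eq_norm_sq ℂ]

lemma auxB {H : Type u} [NormedAddCommGroup H] [InnerProductSpace ℂ H] [CompleteSpace H]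
    {ι : Type*} (v : ι → ℝ) (hv : ∀ i, 0 < v i)
    (W : ι → Submodule ℂ H) [∀ i, CompleteSpace (W i)]
    (K : ι → Type u) (e : ∀ i, HilbertBasis (K i) ℂ (W i)) (x : H) :
    ∑' p : Σ i, K i, ‖(inner ℂ ((v p.1 : ℂ) • ((e p.1 p.2 : W p.1) : H)) x : ℂ)‖ ^ 2 =
      ∑' i, v i ^ 2 * ‖((W i).orthogonalProjectionOnto x : H)‖ ^ 2 := by
  have hterm : ∀ (i : ι) (j : K i),
      ‖(inner ℂ ((v i : ℂ) • ((e i j : W i) : H)) x : ℂ)‖ ^ 2 =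
      v i ^ 2 * ‖(inner ℂ (e i j) ((W i).orthogonalProjectionOnto x) : ℂ)‖ ^ 2 := by
    intro i j
    rw [inner_smul_left, Submodule.inner_orthogonalProjectionOnto_eq_of_mem_left]
    rw [norm_mul, mul_pow, RCLike.norm_conj]
    congr 1
    rw [Complex.norm_real, Real.norm_eq_abs, abs_of_pos (hv i)]
  have hs : ∀ i, HasSum (fun j => v i ^ 2 * ‖(inner ℂ (e i j) ((W i).orthogonalProjectionOnto x) : ℂ)‖ ^ 2)
      (v i ^ 2 * ‖((W i).orthogonalProjectionOnto x : H)‖ ^ 2) := by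
    intro i
    have := (auxA (e i) ((W i).orthogonalProjectionOnto x)).mul_left (v i ^ 2)
    simpa using this
  have hnn : ∀ (i : ι) (j : K i),
      (0:ℝ) ≤ v i ^ 2 * ‖(inner ℂ (e i j) ((W i).orthogonalProjectionOnto x) : ℂ)‖ ^ 2 := by
    intro i j; positivity
  have key : ∑' p : Σ i, K i,
      ENNReal.ofReal (v p.1 ^ 2 * ‖(inner ℂ (e p.1 p.2) ((W p.1).orthogonalProjectionOnto x) : ℂ)‖ ^ 2) =
      ∑' i, ENNReal.ofReal (v i ^ 2 * ‖((W i).orthogonalProjectionOnto x : H)‖ ^ 2) := by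
    rw [ENNReal.tsum_sigma']
    congr 1
    funext i
    rw [← ENNReal.ofReal_tsum_of_nonneg (hnn i) (hs i).summable, (hs i).tsum_eq]
  calc ∑' p : Σ i, K i, ‖(inner ℂ ((v p.1 : ℂ) • ((e p.1 p.2 : W p.1) : H)) x : ℂ)‖ ^ 2
      = ∑' p : Σ i, K i, (ENNReal.ofReal
          (v p.1 ^ 2 * ‖(inner ℂ (e p.1 p.2) ((W p.1).orthogonalProjectionOnto x) : ℂ)‖ ^ 2)).toReal := by
        congr 1; funext p
        rw [ENNReal.toReal_ofReal (hnn p.1 p.2), hterm p.1 p.2]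
    _ = (∑' p : Σ i, K i, ENNReal.ofReal
          (v p.1 ^ 2 * ‖(inner ℂ (e p.1 p.2) ((W p.1).orthogonalProjectionOnto x) : ℂ)‖ ^ 2)).toReal :=
        (ENNReal.tsum_toReal_eq (fun p => ENNReal.ofReal_ne_top)).symm
    _ = (∑' i, ENNReal.ofReal (v i ^ 2 * ‖((W i).orthogonalProjectionOnto x : H)‖ ^ 2)).toReal := by
        rw [key]
    _ = ∑' i, v i ^ 2 * ‖((W i).orthogonalProjectionOnto x : H)‖ ^ 2 := by
        rw [ENNReal.tsum_toReal_eq (fun i => ENNReal.ofReal_ne_top)]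
        congr 1; funext i
        rw [ENNReal.toReal_ofReal (by positivity)]

/-- {(W_i, v_i)} is a fusion frame with bounds A, B if and only if for
every choice of orthonormal (Hilbert) bases {e_ij}_j of the subspaces W_i, the family
{v_i e_ij} is a frame for H with bounds A, B. -/
theorem fusion_frame_iff_orthonormal_bases_frame {H : Type u} [NormedAddCommGroup H]
    [InnerProductSpace ℂ H] [CompleteSpace H]
    {ι : Type*} (v : ι → ℝ) (hv : ∀ i, 0 < v i)
    (W : ι → Submodule ℂ H) [∀ i, CompleteSpace (W i)]
    (A B : ℝ) (hA : 0 < A) (hAB : A ≤ B) :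
    (∀ x : H,
      A * ‖x‖ ^ 2 ≤ ∑' i, v i ^ 2 * ‖((W i).orthogonalProjectionOnto x : H)‖ ^ 2 ∧
      ∑' i, v i ^ 2 * ‖((W i).orthogonalProjectionOnto x : H)‖ ^ 2 ≤ B * ‖x‖ ^ 2) ↔
    (∀ (K : ι → Type u) (e : ∀ i, HilbertBasis (K i) ℂ (W i)) (x : H),
      A * ‖x‖ ^ 2 ≤
        ∑' p : Σ i, K i, ‖(inner ℂ ((v p.1 : ℂ) • ((e p.1 p.2 : W p.1) : H)) x : ℂ)‖ ^ 2 ∧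
      ∑' p : Σ i, K i, ‖(inner ℂ ((v p.1 : ℂ) • ((e p.1 p.2 : W p.1) : H)) x : ℂ)‖ ^ 2 ≤
        B * ‖x‖ ^ 2) := by
  constructor
  · intro h K e x
    rw [auxB v hv W K e x]
    exact h x
  · intro h x
    choose w b _ using fun i => exists_hilbertBasis ℂ (W i)
    have := h (fun i => ↥(w i)) b x
    rwa [auxB v hv W (fun i => ↥(w i)) b x] at this
end
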